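/- arXiv:1709.02333 — 6 statements merged into one kernel-verified Lean document; each statement's English description precedes it below -/
import Mathlib

section
/- Let n ∈ ℤ₊, let ω ∈ ℝⁿ be rationally independent, and let G: 𝕋ⁿ → 𝕋ⁿ be a continuous map satisfying G(x + tω) = G(x) − tω for all x ∈ 𝕋ⁿ and all t ∈ ℝ (i.e. G reverses the quasi-periodic flow x ↦ x + tω). Then G(x) = G(0) − x for all x ∈ 𝕋ⁿ; in particular G is an involution, and its fixed point set {x ∈ 𝕋ⁿ : G(x) = x} = {x ∈ 𝕋ⁿ : 2x = G(0)} consists of exactly 2ⁿ isolated points. (Equivalently, after a shift of the origin the involution G takes the form x ↦ −x, whose fixed points are the 2ⁿ points (x₁,…,xₙ) with each xᵢ equal to 0 or π.) -/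
open scoped BigOperators

/-- The `n`-torus `(ℝ/2πℤ)ⁿ`. -/
abbrev Torus (n : ℕ) := Fin n → AddCircle (2 * Real.pi)

/-- A vector `ω ∈ ℝⁿ` is rationally independent if `⟨ω,k⟩ ≠ 0` for all `k ∈ ℤⁿ \ {0}`. -/
def RationallyIndependent {n : ℕ} (ω : Fin n → ℝ) : Prop :=
  ∀ k : Fin n → ℤ, k ≠ 0 → (∑ i, (k i : ℝ) * ω i) ≠ 0

/-- The element `tω` of the torus, for `t ∈ ℝ` and `ω ∈ ℝⁿ`. -/
noncomputable def torusVec {n : ℕ} (ω : Fin n → ℝ) (t : ℝ) : Torus n :=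
  fun i => ((t * ω i : ℝ) : AddCircle (2 * Real.pi))

/-! ### Auxiliary material -/

open Complex MeasureTheory Filter Topology intervalIntegral Submodule Set Real

noncomputable section FlowAux

instance factPos : Fact (0 < 2 * Real.pi) := ⟨by positivity⟩

variable {n : ℕ}

/-- Characters of the torus. -/
def torusChar (n : ℕ) (k : Fin n → ℤ) : C(Torus n, ℂ) :=
  ∏ i, (fourier (k i)).comp ⟨fun x => x i, continuous_apply i⟩

lemma torusChar_apply (k : Fin n → ℤ) (x : Torus n) :
    torusChar n k x = ∏ i, fourier (k i) (x i) := by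
  simp [torusChar]

lemma fourier_point_add {T : ℝ} (m : ℤ) (x y : AddCircle T) :
    fourier m (x + y) = fourier m x * fourier m y := by
  simp only [fourier_apply, smul_add, AddCircle.toCircle_add, Circle.coe_mul]

lemma torusChar_zero : torusChar n 0 = 1 := by
  ext x
  simp [torusChar_apply, fourier_zero]

lemma torusChar_mul (k l : Fin n → ℤ) :
    torusChar n k * torusChar n l = torusChar n (k + l) := by
  ext x
  simp only [ContinuousMap.mul_apply, torusChar_apply, Pi.add_apply]
  rw [← Finset.prod_mul_distrib]
  exact Finset.prod_congr rfl fun i _ => (fourier_add (m := k i) (n := l i)).symm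

lemma torusChar_star (k : Fin n → ℤ) :
    star (torusChar n k) = torusChar n (-k) := by
  ext x
  simp only [ContinuousMap.star_apply, torusChar_apply, Pi.neg_apply]
  rw [star_prod]
  refine Finset.prod_congr rfl fun i _ => ?_
  rw [show (star (fourier (k i) (x i)) : ℂ) = (starRingEnd ℂ) (fourier (k i) (x i)) from rfl,
    ← fourier_neg]

/-- The star subalgebra generated by the torus characters. -/
def torusSubalgebra (n : ℕ) : StarSubalgebra ℂ C(Torus n, ℂ) where
  toSubalgebra := Algebra.adjoin ℂ (Set.range (torusChar n))
  star_mem' := by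
    show Algebra.adjoin ℂ (Set.range (torusChar n)) ≤
      star (Algebra.adjoin ℂ (Set.range (torusChar n)))
    refine Algebra.adjoin_le ?_
    rintro - ⟨k, rfl⟩
    exact Algebra.subset_adjoin ⟨-k, (torusChar_star k).symm⟩

lemma torusSubalgebra_coe (n : ℕ) :
    Subalgebra.toSubmodule (torusSubalgebra n).toSubalgebra
      = span ℂ (Set.range (torusChar n)) := by
  apply Algebra.adjoin_eq_span_of_subset
  refine Subset.trans ?_ Submodule.subset_span
  intro x hx
  refine Submonoid.closure_induction (fun _ => id) ⟨0, torusChar_zero⟩ ?_ hx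
  rintro - - - - ⟨k, rfl⟩ ⟨l, rfl⟩
  exact ⟨k + l, (torusChar_mul k l).symm⟩

lemma torusSubalgebra_separatesPoints (n : ℕ) : (torusSubalgebra n).SeparatesPoints := by
  intro x y hxy
  obtain ⟨i, hi⟩ : ∃ i, x i ≠ y i := by
    by_contra h
    push_neg at h
    exact hxy (funext h)
  refine ⟨_, ⟨torusChar n (Pi.single i 1), Algebra.subset_adjoin ⟨_, rfl⟩, rfl⟩, ?_⟩
  have hval : ∀ z : Torus n, torusChar n (Pi.single i 1) z = fourier 1 (z i) := by
    intro z
    rw [torusChar_apply]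
    rw [Finset.prod_eq_single i (fun j _ hj => by
      rw [Pi.single_eq_of_ne hj]; exact fourier_zero) (fun h => absurd (Finset.mem_univ i) h)]
    rw [Pi.single_eq_same]
  dsimp only
  rw [hval, hval, fourier_one, fourier_one]
  intro h
  rw [Circle.coe_inj] at h
  exact hi (AddCircle.injective_toCircle (by positivity : (0:ℝ) < 2 * Real.pi).ne' h)

lemma torus_span_closure_eq_top (n : ℕ) :
    (span ℂ (Set.range (torusChar n))).topologicalClosure = ⊤ := by
  rw [← torusSubalgebra_coe]
  exact congr_arg (Subalgebra.toSubmodule <| StarSubalgebra.toSubalgebra ·)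
    (ContinuousMap.starSubalgebra_topologicalClosure_eq_top_of_separatesPoints
      (torusSubalgebra n) (torusSubalgebra_separatesPoints n))

variable (ω : Fin n → ℝ)

lemma continuous_flow (x : Torus n) : Continuous fun t : ℝ => x + torusVec ω t := by
  refine continuous_const.add ?_
  refine continuous_pi fun i => ?_
  exact (AddCircle.continuous_mk' _).comp (continuous_id.mul continuous_const)

lemma torusChar_flow (k : Fin n → ℤ) (x : Torus n) (t : ℝ) :
    torusChar n k (x + torusVec ω t)
      = Complex.exp ((((∑ i, (k i : ℝ) * ω i : ℝ) : ℂ) * Complex.I) * (t : ℂ))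
        * torusChar n k x := by
  have hπ : ((Real.pi : ℝ) : ℂ) ≠ 0 := Complex.ofReal_ne_zero.mpr Real.pi_ne_zero
  simp only [torusChar_apply, Pi.add_apply]
  have h1 : ∀ i : Fin n,
      fourier (k i) ((x + torusVec ω t) i)
        = fourier (k i) (x i) * Complex.exp (((k i : ℝ) * ω i : ℝ) * Complex.I * t) := by
    intro i
    have : (x + torusVec ω t) i = x i + ((t * ω i : ℝ) : AddCircle (2 * Real.pi)) := rfl
    rw [this, fourier_point_add, fourier_coe_apply]
    congr 1
    have h2c : (2 * (Real.pi : ℂ)) ≠ 0 := mul_ne_zero two_ne_zero hπ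
    push_cast
    congr 1
    rw [div_eq_iff h2c]
    ring
  calc (∏ i, fourier (k i) ((x + torusVec ω t) i))
      = ∏ i, (fourier (k i) (x i) * Complex.exp (((k i : ℝ) * ω i : ℝ) * Complex.I * t)) := by
        refine Finset.prod_congr rfl fun i _ => ?_
        simpa using h1 i
    _ = (∏ i, fourier (k i) (x i)) * ∏ i, Complex.exp (((k i : ℝ) * ω i : ℝ) * Complex.I * t) := by
        rw [Finset.prod_mul_distrib]
    _ = Complex.exp ((((∑ i, (k i : ℝ) * ω i : ℝ) : ℂ) * Complex.I) * (t : ℂ))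
        * ∏ i, fourier (k i) (x i) := by
        rw [← Complex.exp_sum, mul_comm]
        have hsum : (∑ i, (((k i : ℝ) * ω i : ℝ) : ℂ) * Complex.I * (t : ℂ))
            = (((∑ i, (k i : ℝ) * ω i : ℝ) : ℂ) * Complex.I) * (t : ℂ) := by
          rw [← Finset.sum_mul, ← Finset.sum_mul]
          norm_cast
        rw [hsum]

/-- The time average of `g` along the flow, divided by `T`. -/
def flowAvg (g : C(Torus n, ℂ)) (x : Torus n) (T : ℝ) : ℂ :=
  (∫ t in (0:ℝ)..T, g (x + torusVec ω t)) / (T : ℂ)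

lemma flow_integrable (g : C(Torus n, ℂ)) (x : Torus n) (a b : ℝ) :
    IntervalIntegrable (fun t => g (x + torusVec ω t)) volume a b :=
  (g.continuous.comp (continuous_flow ω x)).intervalIntegrable a b

/-- Averages of elements of the character span converge, uniformly in the base point. -/
lemma span_avg_tendsto (hω : RationallyIndependent ω) (g : C(Torus n, ℂ))
    (hg : g ∈ span ℂ (Set.range (torusChar n))) :
    ∃ c : ℂ, ∀ x : Torus n, Tendsto (fun T : ℝ => flowAvg ω g x T) atTop (𝓝 c) := by
  induction hg using Submodule.span_induction with
  | mem g hg =>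
    obtain ⟨k, rfl⟩ := hg
    by_cases hk : k = 0
    · subst hk
      refine ⟨1, fun x => ?_⟩
      have : ∀ᶠ T : ℝ in atTop, flowAvg ω (torusChar n 0) x T = 1 := by
        filter_upwards [eventually_gt_atTop (0:ℝ)] with T hT
        unfold flowAvg
        rw [torusChar_zero]
        simp only [ContinuousMap.one_apply]
        rw [intervalIntegral.integral_const]
        simp only [sub_zero, smul_eq_mul, mul_one]
        rw [Complex.real_smul, mul_one]
        exact div_self (by exact_mod_cast hT.ne')
      rw [tendsto_congr' this]
      exact tendsto_const_nhds
    · refine ⟨0, fun x => ?_⟩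
      set a : ℝ := ∑ i, (k i : ℝ) * ω i with ha
      have haz : a ≠ 0 := hω k hk
      set c : ℂ := (a : ℂ) * Complex.I with hc
      have hcz : c ≠ 0 := mul_ne_zero (Complex.ofReal_ne_zero.mpr haz) Complex.I_ne_zero
      have hint : ∀ T : ℝ, (∫ t in (0:ℝ)..T, torusChar n k (x + torusVec ω t))
          = ((Complex.exp (c * T) - 1) / c) * torusChar n k x := by
        intro T
        rw [intervalIntegral.integral_congr
          (g := fun t : ℝ => Complex.exp (c * t) * torusChar n k x)
          (fun t _ => by rw [torusChar_flow ω k x t])]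
        rw [intervalIntegral.integral_mul_const, integral_exp_mul_complex hcz]
        norm_num
      have hbound : ∀ᶠ T : ℝ in atTop,
          ‖flowAvg ω (torusChar n k) x T‖ ≤ (2 / ‖c‖ * ‖torusChar n k x‖) / T := by
        filter_upwards [eventually_gt_atTop (0:ℝ)] with T hT
        unfold flowAvg
        rw [hint T, norm_div, norm_mul, norm_div]
        have hT' : ‖(T:ℂ)‖ = T := by
          rw [Complex.norm_real, Real.norm_eq_abs, abs_of_pos hT]
        rw [hT']
        have hexp : ‖Complex.exp (c * T) - 1‖ ≤ 2 := by
          refine (norm_sub_le _ _).trans ?_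
          have : ‖Complex.exp (c * T)‖ = 1 := by
            rw [Complex.norm_exp]
            have : (c * T).re = 0 := by
              rw [hc]
              simp [Complex.mul_re]
            rw [this, Real.exp_zero]
          rw [this, norm_one]
          norm_num
        gcongr
      refine squeeze_zero_norm' hbound ?_
      exact Tendsto.div_atTop tendsto_const_nhds tendsto_id
  | zero =>
    refine ⟨0, fun x => ?_⟩
    have : ∀ T : ℝ, flowAvg ω (0 : C(Torus n, ℂ)) x T = 0 := by
      intro T
      unfold flowAvg
      simp
    simpa [this] using tendsto_const_nhds
  | add g₁ g₂ hg₁ hg₂ ih₁ ih₂ =>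
    obtain ⟨c₁, hc₁⟩ := ih₁
    obtain ⟨c₂, hc₂⟩ := ih₂
    refine ⟨c₁ + c₂, fun x => ?_⟩
    have : ∀ T : ℝ, flowAvg ω (g₁ + g₂) x T = flowAvg ω g₁ x T + flowAvg ω g₂ x T := by
      intro T
      unfold flowAvg
      rw [← add_div]
      congr 1
      rw [← intervalIntegral.integral_add (flow_integrable ω g₁ x 0 T)
        (flow_integrable ω g₂ x 0 T)]
      simp
    simpa [this] using (hc₁ x).add (hc₂ x)
  | smul r g hg ih =>
    obtain ⟨c, hc⟩ := ih
    refine ⟨r * c, fun x => ?_⟩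
    have : ∀ T : ℝ, flowAvg ω (r • g) x T = r * flowAvg ω g x T := by
      intro T
      unfold flowAvg
      have hfun : (fun t : ℝ => (r • g) (x + torusVec ω t))
          = fun t : ℝ => r * g (x + torusVec ω t) := by
        ext t; simp
      rw [hfun, intervalIntegral.integral_const_mul, mul_div_assoc]
    simpa [this] using (hc x).const_mul r

/-- A continuous complex function invariant under the flow is constant. -/
lemma invariant_const (hω : RationallyIndependent ω) (f : C(Torus n, ℂ))
    (hf : ∀ (x : Torus n) (t : ℝ), f (x + torusVec ω t) = f x) (x : Torus n) :
    f x = f 0 := by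
  have havg : ∀ (y : Torus n) (T : ℝ), 0 < T → flowAvg ω f y T = f y := by
    intro y T hT
    unfold flowAvg
    rw [intervalIntegral.integral_congr (g := fun _ : ℝ => f y) (fun t _ => hf y t)]
    rw [intervalIntegral.integral_const, sub_zero, Complex.real_smul]
    exact mul_div_cancel_left₀ _ (by exact_mod_cast hT.ne')
  have key : ∀ ε : ℝ, 0 < ε → ‖f x - f 0‖ ≤ 2 * ε := by
    intro ε hε
    have hftop : f ∈ closure ((span ℂ (Set.range (torusChar n))
        : Submodule ℂ C(Torus n, ℂ)) : Set C(Torus n, ℂ)) := by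
      rw [← Submodule.topologicalClosure_coe, torus_span_closure_eq_top]
      exact Set.mem_univ f
    obtain ⟨g, hgmem, hdist⟩ := Metric.mem_closure_iff.mp hftop ε hε
    obtain ⟨c, hc⟩ := span_avg_tendsto ω hω g hgmem
    have hclose : ∀ (y : Torus n) (T : ℝ), 0 < T →
        ‖flowAvg ω f y T - flowAvg ω g y T‖ ≤ ε := by
      intro y T hT
      unfold flowAvg
      rw [div_sub_div_same,
        ← intervalIntegral.integral_sub (flow_integrable ω f y 0 T) (flow_integrable ω g y 0 T),
        norm_div]
      have hTc : ‖(T : ℂ)‖ = T := by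
        rw [Complex.norm_real, Real.norm_eq_abs, abs_of_pos hT]
      rw [hTc, div_le_iff₀ hT]
      refine le_trans (intervalIntegral.norm_integral_le_of_norm_le_const
        (C := dist f g) fun t _ => ?_) ?_
      · rw [← dist_eq_norm]
        exact ContinuousMap.dist_apply_le_dist _
      · rw [sub_zero, abs_of_pos hT]
        exact mul_le_mul_of_nonneg_right hdist.le hT.le
    have hev : ∀ᶠ T : ℝ in atTop,
        ‖f x - f 0‖ - 2 * ε ≤ ‖flowAvg ω g x T - flowAvg ω g 0 T‖ := by
      filter_upwards [eventually_gt_atTop (0 : ℝ)] with T hT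
      have h1 := hclose x T hT
      have h2 := hclose 0 T hT
      have hfx := havg x T hT
      have hf0 := havg 0 T hT
      have hdecomp : f x - f 0 = (flowAvg ω f x T - flowAvg ω g x T)
          + (flowAvg ω g x T - flowAvg ω g 0 T) + (flowAvg ω g 0 T - flowAvg ω f 0 T) := by
        rw [hfx, hf0]; ring
      have hb : ‖f x - f 0‖ ≤ ε + ‖flowAvg ω g x T - flowAvg ω g 0 T‖ + ε := by
        rw [hdecomp]
        refine le_trans (norm_add₃_le) ?_
        have h2' : ‖flowAvg ω g 0 T - flowAvg ω f 0 T‖ ≤ ε := by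
          rw [norm_sub_rev]; exact h2
        gcongr
      linarith
    have hlim : Tendsto (fun T : ℝ => ‖flowAvg ω g x T - flowAvg ω g 0 T‖) atTop (𝓝 0) := by
      have h0 := (hc x).sub (hc 0)
      rw [sub_self] at h0
      simpa using h0.norm
    have := ge_of_tendsto hlim hev
    linarith
  by_contra hne
  have hpos : 0 < ‖f x - f 0‖ := by
    rw [norm_pos_iff, sub_ne_zero]
    exact hne
  have := key (‖f x - f 0‖ / 8) (by positivity)
  linarith

lemma pi_coe_ne_zero : ((Real.pi : ℝ) : AddCircle (2 * Real.pi)) ≠ 0 := by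
  intro h0
  obtain ⟨m, hm⟩ := (AddCircle.coe_eq_zero_iff _).mp h0
  rw [zsmul_eq_mul] at hm
  have hπ := Real.pi_ne_zero
  have h3 : ((m : ℝ) * 2) * Real.pi = 1 * Real.pi := by
    rw [one_mul, mul_assoc]
    exact hm
  have h2 : (m : ℝ) * 2 = 1 := mul_right_cancel₀ hπ h3
  have h4 : (m * 2 : ℤ) = 1 := by exact_mod_cast h2
  omega

lemma solve1d (r s : ℝ)
    (h : ((s : AddCircle (2 * Real.pi))) + ↑s = ↑r) :
    (s : AddCircle (2 * Real.pi)) = ↑(r / 2) ∨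
      (s : AddCircle (2 * Real.pi)) = ↑(r / 2) + ↑Real.pi := by
  have h1 : ((s + s - r : ℝ) : AddCircle (2 * Real.pi)) = 0 := by
    rw [AddCircle.coe_sub, AddCircle.coe_add, h, sub_self]
  obtain ⟨m, hm⟩ := (AddCircle.coe_eq_zero_iff _).mp h1
  rw [zsmul_eq_mul] at hm
  rcases Int.even_or_odd m with ⟨j, hj⟩ | ⟨j, hj⟩
  · left
    have h2 : ((s - r / 2 : ℝ) : AddCircle (2 * Real.pi)) = 0 := by
      rw [AddCircle.coe_eq_zero_iff]
      refine ⟨j, ?_⟩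
      rw [zsmul_eq_mul]
      subst hj
      push_cast at hm
      linear_combination hm / 2
    rw [AddCircle.coe_sub, sub_eq_zero] at h2
    exact h2
  · right
    have h2 : ((s - (r / 2 + Real.pi) : ℝ) : AddCircle (2 * Real.pi)) = 0 := by
      rw [AddCircle.coe_eq_zero_iff]
      refine ⟨j, ?_⟩
      rw [zsmul_eq_mul]
      subst hj
      push_cast at hm
      linear_combination hm / 2
    rw [AddCircle.coe_sub, sub_eq_zero, AddCircle.coe_add] at h2
    exact h2

end FlowAux

/-- a continuous map `G : 𝕋ⁿ → 𝕋ⁿ` reversing the quasi-periodic flow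
`x ↦ x + tω` (with `ω` rationally independent), i.e. satisfying `G(x + tω) = G(x) - tω`,
must be of the form `G(x) = G(0) - x`.  In particular `G` is an involution, its fixed point
set equals `{x : 2x = G 0}`, and that set is finite, consisting of exactly `2ⁿ` points. -/
theorem flow_reversing_map_on_torus
    (n : ℕ) (ω : Fin n → ℝ) (hω : RationallyIndependent ω)
    (G : Torus n → Torus n) (hGcont : Continuous G)
    (hGrev : ∀ (x : Torus n) (t : ℝ), G (x + torusVec ω t) = G x - torusVec ω t) :
    (∀ x : Torus n, G x = G 0 - x) ∧
    Function.Involutive G ∧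
    {x : Torus n | G x = x} = {x : Torus n | x + x = G 0} ∧
    {x : Torus n | G x = x}.Finite ∧
    {x : Torus n | G x = x}.ncard = 2 ^ n := by
  classical
  have hform : ∀ x : Torus n, G x = G 0 - x := by
    have hHcont : Continuous fun y : Torus n => G y + y := hGcont.add continuous_id
    have hHinv : ∀ (y : Torus n) (t : ℝ),
        G (y + torusVec ω t) + (y + torusVec ω t) = G y + y := by
      intro y t
      rw [hGrev]
      abel
    intro x
    have hcomp : ∀ i : Fin n, G x i + x i = G 0 i + (0 : Torus n) i := by
      intro i
      set f : C(Torus n, ℂ) := (fourier 1).comp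
        ⟨fun y : Torus n => G y i + y i, ((continuous_apply i).comp hHcont)⟩ with hfdef
      have hfi : ∀ (y : Torus n) (t : ℝ), f (y + torusVec ω t) = f y := by
        intro y t
        simp only [hfdef, ContinuousMap.comp_apply, ContinuousMap.coe_mk]
        congr 1
        exact congrFun (hHinv y t) i
      have hconst := invariant_const ω hω f hfi x
      simp only [hfdef, ContinuousMap.comp_apply, ContinuousMap.coe_mk, fourier_one] at hconst
      rw [Circle.coe_inj] at hconst
      exact AddCircle.injective_toCircle (by positivity : (0:ℝ) < 2 * Real.pi).ne' hconst
    have hGx : G x + x = G 0 := by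
      have : G x + x = G 0 + 0 := funext fun i => hcomp i
      simpa using this
    exact eq_sub_of_add_eq hGx
  have hinvol : Function.Involutive G := by
    intro x
    rw [hform x, hform (G 0 - x), sub_sub_cancel]
  have hset : {x : Torus n | G x = x} = {x : Torus n | x + x = G 0} := by
    ext x
    simp only [Set.mem_setOf_eq, hform x]
    constructor
    · intro h
      exact (sub_eq_iff_eq_add.mp h).symm
    · intro h
      exact sub_eq_iff_eq_add.mpr h.symm
  have hsurj : ∀ i : Fin n, ∃ rr : ℝ, ((rr : AddCircle (2 * Real.pi))) = G 0 i := by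
    intro i
    obtain ⟨rr, hrr⟩ := QuotientAddGroup.mk_surjective (G 0 i)
    exact ⟨rr, hrr⟩
  choose r hr using hsurj
  set F : (Fin n → Bool) → Torus n :=
    fun b i => ((r i / 2 + (if b i then Real.pi else 0) : ℝ) : AddCircle (2 * Real.pi)) with hFdef
  have hFcoe : ∀ b i, F b i
      = ((r i / 2 : ℝ) : AddCircle (2 * Real.pi)) + ↑(if b i then Real.pi else (0:ℝ)) := by
    intro b i
    rw [hFdef, ← AddCircle.coe_add]
  have hπ := pi_coe_ne_zero
  have hkey : ∀ u v : Bool,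
      (((if u = true then Real.pi else 0 : ℝ)) : AddCircle (2 * Real.pi))
        = ↑(if v = true then Real.pi else 0) → u = v := by
    have hzero : (((0:ℝ)) : AddCircle (2 * Real.pi)) = 0 := rfl
    intro u v huv
    cases u <;> cases v
    · rfl
    · exfalso
      rw [if_neg Bool.false_ne_true, if_pos rfl] at huv
      exact hπ (huv.symm.trans hzero)
    · exfalso
      rw [if_pos rfl, if_neg Bool.false_ne_true] at huv
      exact hπ (huv.trans hzero)
    · rfl
  have hFinj : Function.Injective F := by
    intro b b' hbb
    funext i
    have hcompi := (hFcoe b i).symm.trans ((congrFun hbb i).trans (hFcoe b' i))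
    exact hkey _ _ (add_left_cancel hcompi)
  have hrange : {x : Torus n | x + x = G 0} = Set.range F := by
    ext x
    simp only [Set.mem_setOf_eq, Set.mem_range]
    constructor
    · intro hx
      have hcomp : ∀ i, x i = ↑(r i / 2) ∨ x i = ↑(r i / 2) + ↑Real.pi := by
        intro i
        obtain ⟨s, hs⟩ := QuotientAddGroup.mk_surjective (x i)
        have hss : ((s : AddCircle (2 * Real.pi))) + ↑s = ↑(r i) := by
          rw [hs, hr i]
          exact congrFun hx i
        rcases solve1d (r i) s hss with h | h
        · left; rw [← hs]; exact h
        · right; rw [← hs]; exact h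
      refine ⟨fun j => if x j = ↑(r j / 2) then false else true, ?_⟩
      funext i
      refine (hFcoe (fun j => if x j = ↑(r j / 2) then false else true) i).trans ?_
      by_cases hxi : x i = ↑(r i / 2)
      · rw [if_pos hxi, if_neg Bool.false_ne_true, hxi]
        rw [show (((0:ℝ)) : AddCircle (2 * Real.pi)) = 0 from rfl, add_zero]
      · rw [if_neg hxi, if_pos rfl]
        rcases hcomp i with h | h
        · exact absurd h hxi
        · exact h.symm
    · rintro ⟨b, rfl⟩
      funext i
      show F b i + F b i = G 0 i
      rw [hFdef, ← AddCircle.coe_add, ← hr i]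
      cases hb : b i
      · congr 1
        norm_num
      · have harith : (r i / 2 + if true = true then Real.pi else 0)
            + (r i / 2 + if true = true then Real.pi else 0) = r i + 2 * Real.pi := by
          simp only [reduceIte]
          ring
        rw [harith, AddCircle.coe_add_period]
  have hfin : {x : Torus n | G x = x}.Finite := by
    rw [hset, hrange]
    exact Set.finite_range F
  refine ⟨hform, hinvol, hset, hfin, ?_⟩
  rw [hset, hrange, ← Set.image_univ, Set.ncard_image_of_injective _ hFinj, Set.ncard_univ,
    Nat.card_eq_fintype_card]
  simp [Fintype.card_fun]
end

section
/- Let n ∈ ℤ₊, let ω ∈ ℝⁿ be rationally independent, let K be a compact Hausdorff topological space, F: 𝕋ⁿ → K a surjective continuous mapping, and 𝔊 a continuous action of ℝ on K such that F(φ + ωt) = 𝔊^t(F(φ)) for all φ ∈ 𝕋ⁿ and t ∈ ℝ. Then for all φ¹, φ² ∈ 𝕋ⁿ one has F(φ¹) = F(φ²) if and only if φ¹ − φ² ∈ F⁻¹({F(0)}). -/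
open scoped BigOperators

noncomputable section
namespace Kronecker

open MeasureTheory Set Function Complex

instance : Fact (0 < 2 * Real.pi) := ⟨Real.two_pi_pos⟩

/-- The character of the torus associated with `k : ℤⁿ`. -/
def ek (n : ℕ) (k : Fin n → ℤ) : C(Torus n, ℂ) :=
  ⟨fun φ => ∏ i, fourier (k i) (φ i),
   continuous_finset_prod _ fun i _ => (fourier (k i)).continuous.comp (continuous_apply i)⟩

lemma ek_apply (n : ℕ) (k : Fin n → ℤ) (φ : Torus n) :
    ek n k φ = ∏ i, fourier (k i) (φ i) := rfl

lemma ek_zero (n : ℕ) : ek n 0 = 1 := by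
  ext φ; simp [ek_apply, fourier_zero]

lemma ek_mul (n : ℕ) (k l : Fin n → ℤ) : ek n (k + l) = ek n k * ek n l := by
  ext φ
  simp only [ek_apply, ContinuousMap.mul_apply, Pi.add_apply, ← Finset.prod_mul_distrib]
  exact Finset.prod_congr rfl fun i _ => fourier_add

lemma ek_star (n : ℕ) (k : Fin n → ℤ) : star (ek n k) = ek n (-k) := by
  ext φ
  simp only [ContinuousMap.star_apply, ek_apply, star_prod]
  refine Finset.prod_congr rfl fun i _ => ?_
  rw [Pi.neg_apply, fourier_neg, Complex.star_def]

lemma torusVec_continuous {n : ℕ} (ω : Fin n → ℝ) : Continuous (torusVec ω) :=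
  continuous_pi fun i => (AddCircle.continuous_mk' _).comp (continuous_mul_right (ω i))

lemma ek_torusVec {n : ℕ} (k : Fin n → ℤ) (ω : Fin n → ℝ) (t : ℝ) :
    ek n k (torusVec ω t) = Complex.exp ((((∑ i, (k i : ℝ) * ω i) : ℝ) * Complex.I) * t) := by
  have h2π : (2 * (Real.pi : ℂ)) ≠ 0 := by
    simp [Real.pi_ne_zero]
  simp only [ek_apply, torusVec, fourier_coe_apply, ← Complex.exp_sum]
  congr 1
  rw [Complex.ofReal_sum, Finset.sum_mul, Finset.sum_mul]
  refine Finset.sum_congr rfl fun i _ => ?_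
  push_cast
  field_simp

end Kronecker

namespace Kronecker
open MeasureTheory Set Function Complex Filter

lemma integral_fourier_volume {m : ℤ} (hm : m ≠ 0) :
    ∫ x : AddCircle (2 * Real.pi), fourier m x = 0 := by
  rw [AddCircle.volume_eq_smul_haarAddCircle, integral_smul_measure]
  have h : ∫ x : AddCircle (2 * Real.pi), fourier m x ∂AddCircle.haarAddCircle = 0 :=
    integral_eq_zero_of_add_right_eq_neg (μ := AddCircle.haarAddCircle)
      (fourier_add_half_inv_index hm Real.two_pi_pos)
  rw [h, smul_zero]

lemma integral_ek {n : ℕ} {k : Fin n → ℤ} (hk : k ≠ 0) :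
    ∫ φ : Torus n, ek n k φ = 0 := by
  have h := MeasureTheory.integral_fintype_prod_eq_prod (ι := Fin n) (μ := fun _ => volume)
    (fun i (x : AddCircle (2 * Real.pi)) => fourier (k i) x)
  obtain ⟨i₀, hi₀⟩ := Function.ne_iff.mp hk
  simp only [ek_apply]
  rw [show (volume : Measure (Torus n)) = Measure.pi (fun _ => volume) from rfl, h]
  exact Finset.prod_eq_zero (Finset.mem_univ i₀) (integral_fourier_volume hi₀)

lemma measure_univ_torus (n : ℕ) :
    (volume (Set.univ : Set (Torus n))).toReal = (2 * Real.pi) ^ n := by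
  rw [show (volume : Measure (Torus n)) = Measure.pi (fun _ => volume) from rfl,
    Measure.pi_univ]
  simp [AddCircle.measure_univ, ENNReal.toReal_pow,
    ENNReal.toReal_ofReal Real.two_pi_pos.le, ENNReal.toReal_ofReal Real.pi_pos.le]

end Kronecker

namespace Kronecker
open MeasureTheory Set Function Complex Filter Topology

variable {n : ℕ}

/-- Time average of `f` along the flow, over `[0, T]`. -/
def avg (ω : Fin n → ℝ) (f : C(Torus n, ℂ)) (T : ℝ) : ℂ :=
  (1 / T : ℝ) * ∫ t in (0:ℝ)..T, f (torusVec ω t)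

/-- Normalized space average of `f`. -/
def lm (n : ℕ) (f : C(Torus n, ℂ)) : ℂ :=
  (∫ φ : Torus n, f φ) / (((2 * Real.pi) ^ n : ℝ) : ℂ)

lemma intervalIntegrable_comp (ω : Fin n → ℝ) (f : C(Torus n, ℂ)) (a b : ℝ) :
    IntervalIntegrable (fun t => f (torusVec ω t)) volume a b :=
  (f.continuous.comp (torusVec_continuous ω)).intervalIntegrable a b

lemma integrable_cm (f : C(Torus n, ℂ)) : Integrable (fun φ : Torus n => f φ) := by
  exact f.continuous.integrable_of_hasCompactSupport
    ((isClosed_tsupport _).isCompact)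

lemma tendsto_avg_ek {ω : Fin n → ℝ} (hω : ∀ k : Fin n → ℤ, k ≠ 0 →
      (∑ i, (k i : ℝ) * ω i) ≠ 0) {k : Fin n → ℤ} (hk : k ≠ 0) :
    Tendsto (avg ω (ek n k)) atTop (𝓝 0) := by
  set a : ℝ := ∑ i, (k i : ℝ) * ω i with ha
  have ha0 : a ≠ 0 := hω k hk
  set c : ℂ := (a : ℂ) * Complex.I with hc
  have hc0 : c ≠ 0 := by
    simp [hc, Complex.ext_iff, ha0]
  have havg : ∀ T : ℝ, avg ω (ek n k) T = (1 / T : ℝ) * ((Complex.exp (c * T) - 1) / c) := by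
    intro T
    unfold avg
    congr 1
    have : ∀ t : ℝ, ek n k (torusVec ω t) = Complex.exp (c * t) := fun t => ek_torusVec k ω t
    rw [intervalIntegral.integral_congr (fun t _ => this t), integral_exp_mul_complex hc0]
    simp
  have hbound : ∀ᶠ T : ℝ in atTop, ‖(1 / T : ℝ) * ((Complex.exp (c * T) - 1) / c)‖
      ≤ 2 / ‖c‖ * T⁻¹ := by
    filter_upwards [eventually_ge_atTop (1:ℝ)] with T hT
    have hT0 : (0:ℝ) < T := lt_of_lt_of_le one_pos hT
    have hexp : ‖Complex.exp (c * T) - 1‖ ≤ 2 := by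
      calc ‖Complex.exp (c * T) - 1‖ ≤ ‖Complex.exp (c * T)‖ + ‖(1:ℂ)‖ := norm_sub_le _ _
      _ ≤ 2 := by
        have : ‖Complex.exp (c * T)‖ = 1 := by
          rw [Complex.norm_exp]
          simp [hc]
        rw [this, norm_one]; norm_num
    rw [norm_mul, norm_div]
    have h1 : ‖((1/T : ℝ) : ℂ)‖ = T⁻¹ := by
      simp [abs_of_pos hT0]
    rw [h1]
    rw [mul_comm]
    gcongr
  have hg : Tendsto (fun T : ℝ => 2 / ‖c‖ * T⁻¹) atTop (𝓝 0) := by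
    simpa using tendsto_inv_atTop_zero.const_mul (2 / ‖c‖)
  have := squeeze_zero_norm' hbound hg
  simpa [funext havg] using this

lemma avg_add (ω : Fin n → ℝ) (f g : C(Torus n, ℂ)) (T : ℝ) :
    avg ω (f + g) T = avg ω f T + avg ω g T := by
  unfold avg
  simp only [ContinuousMap.add_apply]
  rw [intervalIntegral.integral_add (intervalIntegrable_comp ω f 0 T)
      (intervalIntegrable_comp ω g 0 T)]
  ring

lemma avg_smul (ω : Fin n → ℝ) (z : ℂ) (f : C(Torus n, ℂ)) (T : ℝ) :
    avg ω (z • f) T = z * avg ω f T := by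
  unfold avg
  rw [show (fun t => (z • f) (torusVec ω t)) = (fun t => z • f (torusVec ω t)) from rfl,
    intervalIntegral.integral_smul]
  simp [smul_eq_mul]; ring

lemma lm_add (f g : C(Torus n, ℂ)) : lm n (f + g) = lm n f + lm n g := by
  unfold lm
  simp only [ContinuousMap.add_apply]
  rw [integral_add (integrable_cm f) (integrable_cm g)]
  ring

lemma lm_smul (z : ℂ) (f : C(Torus n, ℂ)) : lm n (z • f) = z * lm n f := by
  unfold lm
  rw [show (fun φ : Torus n => (z • f) φ) = (fun φ => z • f φ) from rfl, integral_smul]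
  simp [smul_eq_mul]; ring

/-- The set of continuous functions whose time averages converge to the space average. -/
def goodSet (ω : Fin n → ℝ) : Submodule ℂ C(Torus n, ℂ) where
  carrier := {f | Tendsto (avg ω f) atTop (𝓝 (lm n f))}
  add_mem' := by
    intro f g hf hg
    have := hf.add hg
    simp only [Set.mem_setOf_eq, funext (avg_add ω f g), lm_add]
    exact this
  zero_mem' := by
    have h0 : avg ω (0 : C(Torus n, ℂ)) = fun _ => 0 := by
      funext T; unfold avg; simp
    have h1 : lm n (0 : C(Torus n, ℂ)) = 0 := by unfold lm; simp
    simp only [Set.mem_setOf_eq, h0, h1]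
    exact tendsto_const_nhds
  smul_mem' := by
    intro z f hf
    simp only [Set.mem_setOf_eq, funext (avg_smul ω z f), lm_smul]
    exact (tendsto_const_nhds.mul hf)

lemma dist_avg_le (ω : Fin n → ℝ) (f g : C(Torus n, ℂ)) {T : ℝ} (hT : 1 ≤ T) :
    dist (avg ω f T) (avg ω g T) ≤ dist f g := by
  have hT0 : (0:ℝ) < T := lt_of_lt_of_le one_pos hT
  rw [dist_eq_norm]
  unfold avg
  rw [← mul_sub, ← intervalIntegral.integral_sub (intervalIntegrable_comp ω f 0 T)
    (intervalIntegrable_comp ω g 0 T)]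
  have hb : ∀ t ∈ Set.uIoc (0:ℝ) T, ‖f (torusVec ω t) - g (torusVec ω t)‖ ≤ dist f g := by
    intro t _
    rw [← dist_eq_norm]
    exact ContinuousMap.dist_apply_le_dist _
  have := intervalIntegral.norm_integral_le_of_norm_le_const hb
  rw [norm_mul]
  have h1 : ‖((1/T : ℝ) : ℂ)‖ = 1/T := by simp [abs_of_pos hT0]
  rw [h1]
  calc 1/T * ‖∫ t in (0:ℝ)..T, (f (torusVec ω t) - g (torusVec ω t))‖
      ≤ 1/T * (dist f g * |T - 0|) := by
        apply mul_le_mul_of_nonneg_left this (by positivity)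
    _ = dist f g := by
        rw [sub_zero, abs_of_pos hT0]; field_simp
  
lemma dist_lm_le (f g : C(Torus n, ℂ)) : dist (lm n f) (lm n g) ≤ dist f g := by
  rw [dist_eq_norm]
  unfold lm
  rw [div_sub_div_same, ← integral_sub (integrable_cm f) (integrable_cm g)]
  have hb : ∀ᵐ φ : Torus n ∂volume, ‖f φ - g φ‖ ≤ dist f g := by
    filter_upwards with φ
    rw [← dist_eq_norm]
    exact ContinuousMap.dist_apply_le_dist _
  have h := norm_integral_le_of_norm_le_const (μ := (volume : Measure (Torus n))) hb
  rw [norm_div]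
  have hc : ‖(((2 * Real.pi) ^ n : ℝ) : ℂ)‖ = (2 * Real.pi) ^ n := by
    rw [Complex.norm_real]
    exact abs_of_pos (by positivity)
  rw [hc, div_le_iff₀ (by positivity : (0:ℝ) < (2 * Real.pi) ^ n)]
  calc ‖∫ φ : Torus n, (f φ - g φ)‖ ≤ dist f g * (volume (Set.univ : Set (Torus n))).toReal := h
    _ = dist f g * (2 * Real.pi) ^ n := by rw [measure_univ_torus]

lemma goodSet_isClosed (ω : Fin n → ℝ) : IsClosed (goodSet ω : Set C(Torus n, ℂ)) := by
  rw [← isSeqClosed_iff_isClosed]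
  intro fs f hfs hlim
  rw [Metric.tendsto_atTop] at hlim
  show Tendsto (avg ω f) atTop (𝓝 (lm n f))
  rw [Metric.tendsto_atTop]
  intro ε hε
  obtain ⟨m, hm⟩ := hlim (ε/4) (by positivity)
  have hdist : dist (fs m) f < ε/4 := by simpa [dist_comm] using hm m le_rfl
  have hfm : Tendsto (avg ω (fs m)) atTop (𝓝 (lm n (fs m))) := hfs m
  rw [Metric.tendsto_atTop] at hfm
  obtain ⟨N, hN⟩ := hfm (ε/4) (by positivity)
  refine ⟨max N 1, fun T hT => ?_⟩
  have hT1 : 1 ≤ T := le_trans (le_max_right _ _) hT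
  have hTN : N ≤ T := le_trans (le_max_left _ _) hT
  calc dist (avg ω f T) (lm n f)
      ≤ dist (avg ω f T) (avg ω (fs m) T) + dist (avg ω (fs m) T) (lm n (fs m))
        + dist (lm n (fs m)) (lm n f) := dist_triangle4 _ _ _ _
    _ < ε/4 + ε/4 + ε/4 := by
        gcongr
        · exact lt_of_le_of_lt (dist_avg_le ω f (fs m) hT1) (by simpa [dist_comm] using hdist)
        · exact hN T hTN
        · exact lt_of_le_of_lt (dist_lm_le (fs m) f) hdist
    _ < ε := by linarith

lemma ek_mem_goodSet {ω : Fin n → ℝ} (hω : ∀ k : Fin n → ℤ, k ≠ 0 →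
      (∑ i, (k i : ℝ) * ω i) ≠ 0) (k : Fin n → ℤ) : ek n k ∈ goodSet ω := by
  by_cases hk : k = 0
  · subst hk
    rw [ek_zero]
    show Tendsto (avg ω 1) atTop (𝓝 (lm n 1))
    have h1 : lm n 1 = 1 := by
      unfold lm
      simp only [ContinuousMap.one_apply, integral_const, measureReal_def, measure_univ_torus]
      rw [real_smul, mul_one, div_self]
      exact_mod_cast (by positivity : (0:ℝ) < (2 * Real.pi) ^ n).ne'
    rw [h1]
    apply Tendsto.congr' (f₁ := fun _ => (1 : ℂ))
    · filter_upwards [eventually_ge_atTop (1:ℝ)] with T hT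
      have hT0 : (0:ℝ) < T := lt_of_lt_of_le one_pos hT
      unfold avg
      simp only [ContinuousMap.one_apply, intervalIntegral.integral_const,
        sub_zero, real_smul, mul_one]
      rw [← Complex.ofReal_mul, one_div, inv_mul_cancel₀ hT0.ne', Complex.ofReal_one]
    · exact tendsto_const_nhds
  · show Tendsto (avg ω (ek n k)) atTop (𝓝 (lm n (ek n k)))
    have h0 : lm n (ek n k) = 0 := by
      unfold lm
      rw [show (fun φ : Torus n => ek n k φ) = ⇑(ek n k) from rfl]
      rw [integral_ek hk, zero_div]
    rw [h0]
    exact tendsto_avg_ek hω hk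

open Submodule Algebra in
/-- The star subalgebra generated by the characters. -/
def ekAlg (n : ℕ) : StarSubalgebra ℂ C(Torus n, ℂ) where
  toSubalgebra := Algebra.adjoin ℂ (Set.range (ek n))
  star_mem' := by
    show Algebra.adjoin ℂ (Set.range (ek n)) ≤ star (Algebra.adjoin ℂ (Set.range (ek n)))
    refine Algebra.adjoin_le ?_
    rintro - ⟨k, rfl⟩
    exact Algebra.subset_adjoin ⟨-k, (ek_star n k).symm⟩

lemma ekAlg_eq_span (n : ℕ) :
    Subalgebra.toSubmodule (ekAlg n).toSubalgebra = Submodule.span ℂ (Set.range (ek n)) := by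
  apply Algebra.adjoin_eq_span_of_subset
  refine Set.Subset.trans ?_ Submodule.subset_span
  intro x hx
  refine Submonoid.closure_induction (fun _ => id) ⟨0, ?_⟩ ?_ hx
  · exact (ek_zero n).symm ▸ rfl
  · rintro - - - - ⟨k, rfl⟩ ⟨l, rfl⟩
    exact ⟨k + l, ek_mul n k l⟩

lemma ek_single (φ : Torus n) (i : Fin n) :
    ek n (Pi.single i 1) φ = AddCircle.toCircle (φ i) := by
  rw [ek_apply, Finset.prod_eq_single i]
  · rw [Pi.single_eq_same, fourier_one]
  · intro j _ hj
    rw [Pi.single_eq_of_ne hj]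
    exact fourier_zero
  · intro h; exact absurd (Finset.mem_univ i) h

lemma ekAlg_separatesPoints (n : ℕ) : (ekAlg n).SeparatesPoints := by
  intro x y hxy
  obtain ⟨i, hi⟩ := Function.ne_iff.mp hxy
  refine ⟨_, ⟨ek n (Pi.single i 1), Algebra.subset_adjoin ⟨Pi.single i 1, rfl⟩, rfl⟩, ?_⟩
  dsimp only
  rw [ek_single, ek_single]
  intro h
  exact hi (AddCircle.injective_toCircle Real.two_pi_pos.ne'
    (Subtype.coe_inj.mp h))

lemma span_ek_closure_eq_top (n : ℕ) :
    (Submodule.span ℂ (Set.range (ek n))).topologicalClosure = ⊤ := by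
  rw [← ekAlg_eq_span]
  exact congr_arg (Subalgebra.toSubmodule <| StarSubalgebra.toSubalgebra ·)
    (ContinuousMap.starSubalgebra_topologicalClosure_eq_top_of_separatesPoints (ekAlg n)
      (ekAlg_separatesPoints n))

theorem goodSet_eq_top {ω : Fin n → ℝ} (hω : ∀ k : Fin n → ℤ, k ≠ 0 →
      (∑ i, (k i : ℝ) * ω i) ≠ 0) : goodSet ω = ⊤ := by
  have hspan : Submodule.span ℂ (Set.range (ek n)) ≤ goodSet ω :=
    Submodule.span_le.mpr (by rintro - ⟨k, rfl⟩; exact ek_mem_goodSet hω k)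
  have := Submodule.topologicalClosure_minimal _ hspan (goodSet_isClosed ω)
  rw [span_ek_closure_eq_top n] at this
  exact top_le_iff.mp this

theorem dense_range_torusVec {ω : Fin n → ℝ} (hω : ∀ k : Fin n → ℤ, k ≠ 0 →
      (∑ i, (k i : ℝ) * ω i) ≠ 0) : Dense (Set.range (torusVec ω)) := by
  by_contra hd
  rw [dense_iff_closure_eq] at hd
  obtain ⟨p, hp⟩ : ∃ p : Torus n, p ∉ closure (Set.range (torusVec ω)) := by
    by_contra h
    push_neg at h
    exact hd (Set.eq_univ_of_forall h)
  obtain ⟨f₀, hf0, hf1, hficc⟩ := exists_continuous_zero_one_of_isClosed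
    isClosed_closure (isClosed_singleton (x := p))
    (Set.disjoint_singleton_right.mpr hp)
  set f : C(Torus n, ℂ) := ⟨fun φ => ((f₀ φ : ℝ) : ℂ),
    Complex.continuous_ofReal.comp f₀.continuous⟩ with hfdef
  have hmem : f ∈ goodSet ω := by rw [goodSet_eq_top hω]; trivial
  have htend : Tendsto (avg ω f) atTop (𝓝 (lm n f)) := hmem
  have havg0 : avg ω f = fun _ => 0 := by
    funext T
    unfold avg
    have : ∀ t : ℝ, f (torusVec ω t) = 0 := by
      intro t
      have : f₀ (torusVec ω t) = 0 := hf0 (subset_closure ⟨t, rfl⟩)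
      simp [hfdef, this]
    rw [intervalIntegral.integral_congr (fun t _ => this t)]
    simp
  rw [havg0] at htend
  have hlm0 : lm n f = 0 := tendsto_nhds_unique htend (tendsto_const_nhds : Filter.Tendsto (fun _ : ℝ => (0:ℂ)) Filter.atTop (𝓝 0))
  have hint0 : ∫ φ : Torus n, ((f₀ φ : ℝ) : ℂ) = 0 := by
    have := hlm0
    unfold lm at this
    rw [div_eq_zero_iff] at this
    rcases this with h | h
    · exact h
    · exact absurd h (by exact_mod_cast (by positivity : (0:ℝ) < (2 * Real.pi) ^ n).ne')
  have hintR : ∫ φ : Torus n, f₀ φ = 0 := by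
    have h2 : ∫ φ : Torus n, ((f₀ φ : ℝ) : ℂ) = ((∫ φ : Torus n, f₀ φ : ℝ) : ℂ) :=
      integral_ofReal
    rw [h2] at hint0
    exact_mod_cast hint0
  have hpos : 0 < ∫ φ : Torus n, f₀ φ := by
    rw [integral_pos_iff_support_of_nonneg (fun φ => (hficc φ).1)
      (f₀.continuous.integrable_of_hasCompactSupport ((isClosed_tsupport _).isCompact))]
    have hopen : IsOpen (Function.support f₀) := by
      have : Function.support ⇑f₀ = f₀ ⁻¹' {0}ᶜ := by
        ext x; simp [Function.mem_support]
      rw [this]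
      exact (isOpen_compl_singleton).preimage f₀.continuous
    refine hopen.measure_pos volume ⟨p, ?_⟩
    simp [Function.mem_support, hf1 rfl]
  rw [hintR] at hpos
  exact lt_irrefl 0 hpos

end Kronecker


/-- if `F : 𝕋ⁿ → K` is a continuous surjection onto a compact Hausdorff space `K`
semiconjugating the quasi-periodic flow `φ ↦ φ + ωt` (with `ω` rationally independent) to a
continuous flow `𝔊` on `K`, then `F φ¹ = F φ²` iff `φ¹ - φ² ∈ F⁻¹({F 0})`. -/
theorem fiber_of_factor_of_quasiperiodic_flow
    (n : ℕ) (ω : Fin n → ℝ) (hω : RationallyIndependent ω)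
    (K : Type*) [TopologicalSpace K] [CompactSpace K] [T2Space K]
    (F : Torus n → K) (hFcont : Continuous F) (hFsurj : Function.Surjective F)
    (𝔊 : ℝ → K → K)
    (h𝔊cont : Continuous fun q : ℝ × K => 𝔊 q.1 q.2)
    (h𝔊zero : ∀ κ : K, 𝔊 0 κ = κ)
    (h𝔊add : ∀ t s : ℝ, ∀ κ : K, 𝔊 (t + s) κ = 𝔊 t (𝔊 s κ))
    (hconj : ∀ (φ : Torus n) (t : ℝ), F (φ + torusVec ω t) = 𝔊 t (F φ)) :
    ∀ φ₁ φ₂ : Torus n, F φ₁ = F φ₂ ↔ φ₁ - φ₂ ∈ F ⁻¹' {F 0} := by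

  have key : ∀ ψ₁ ψ₂ : Torus n, F ψ₁ = F ψ₂ → ∀ χ : Torus n, F (ψ₁ + χ) = F (ψ₂ + χ) := by
    intro ψ₁ ψ₂ h χ
    set S : Set (Torus n) := {χ : Torus n | F (ψ₁ + χ) = F (ψ₂ + χ)} with hSdef
    have hS : IsClosed S :=
      isClosed_eq (hFcont.comp (continuous_const.add continuous_id))
        (hFcont.comp (continuous_const.add continuous_id))
    have hsub : Set.range (torusVec ω) ⊆ S := by
      rintro - ⟨t, rfl⟩
      simp only [hSdef, Set.mem_setOf_eq, hconj, h]
    have hall : S = Set.univ := by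
      rw [← hS.closure_eq]
      exact ((Kronecker.dense_range_torusVec hω).mono hsub).closure_eq
    have : χ ∈ S := hall ▸ Set.mem_univ χ
    exact this
  intro φ₁ φ₂
  constructor
  · intro h
    have := key φ₁ φ₂ h (-φ₂)
    simp only [Set.mem_preimage, Set.mem_singleton_iff]
    rw [sub_eq_add_neg]
    rw [this, add_neg_cancel]
  · intro h
    have h' : F (φ₁ - φ₂) = F 0 := h
    have := key (φ₁ - φ₂) 0 h' φ₂
    rwa [sub_add_cancel, zero_add] at this
end
end

section
/- Let n ∈ ℤ₊, let ω ∈ ℝⁿ be rationally independent, let K be a compact Hausdorff topological space, F: 𝕋ⁿ → K a surjective continuous mapping, and 𝔊 a continuous action of ℝ on K such that F(φ + ωt) = 𝔊^t(F(φ)) for all φ ∈ 𝕋ⁿ and t ∈ ℝ. Then the set Λ = F⁻¹({F(0)}) is a closed subgroup of the topological group 𝕋ⁿ, and F induces a bijection from the quotient group 𝕋ⁿ/Λ onto K (which is a homeomorphism, 𝕋ⁿ/Λ being compact and K Hausdorff). -/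
open scoped BigOperators
open MeasureTheory AddCircle Complex Set Submodule

namespace KronAux
instance : Fact (0 < 2 * Real.pi) := ⟨by positivity⟩
variable {n : ℕ}

noncomputable def chi (k : Fin n → ℤ) : C(Torus n, ℂ) :=
  ⟨fun φ => ∏ i, fourier (k i) (φ i), by
    exact continuous_finset_prod _ fun i _ =>
      (map_continuous (fourier (k i))).comp (continuous_apply i)⟩

@[simp] lemma chi_apply (k : Fin n → ℤ) (φ : Torus n) :
    chi k φ = ∏ i, fourier (k i) (φ i) := rfl

lemma chi_zero : (chi 0 : C(Torus n, ℂ)) = 1 := by ext φ; simp [fourier_zero]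

lemma chi_add (k l : Fin n → ℤ) : chi (k + l) = chi k * chi l := by
  ext φ
  simp only [chi_apply, ContinuousMap.mul_apply, Pi.add_apply]
  rw [← Finset.prod_mul_distrib]
  exact Finset.prod_congr rfl fun i _ => fourier_add

lemma chi_neg (k : Fin n → ℤ) (φ : Torus n) :
    chi (-k) φ = (starRingEnd ℂ) (chi k φ) := by
  simp only [chi_apply, Pi.neg_apply, map_prod]
  exact Finset.prod_congr rfl fun i _ => fourier_neg

lemma norm_chi_apply (k : Fin n → ℤ) (φ : Torus n) : ‖chi k φ‖ = 1 := by
  simp only [chi_apply]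
  rw [norm_prod]
  exact Finset.prod_eq_one fun i _ => Circle.norm_coe _

lemma chi_torusVec (k : Fin n → ℤ) (ω : Fin n → ℝ) (t : ℝ) :
    chi k (torusVec ω t) =
      Complex.exp (((∑ i, (k i : ℝ) * ω i) * t : ℝ) * Complex.I) := by
  simp only [chi_apply, torusVec, fourier_coe_apply]
  rw [← Complex.exp_sum]
  congr 1
  have hπ : (Real.pi : ℂ) ≠ 0 := Complex.ofReal_ne_zero.mpr Real.pi_ne_zero
  push_cast
  rw [Finset.sum_mul, Finset.sum_mul]
  refine Finset.sum_congr rfl fun i _ => ?_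
  field_simp

/-- The star subalgebra generated by the characters. -/
noncomputable def chiSubalgebra (n : ℕ) : StarSubalgebra ℂ C(Torus n, ℂ) where
  toSubalgebra := Algebra.adjoin ℂ (range chi)
  star_mem' := by
    show Algebra.adjoin ℂ (range (chi (n := n))) ≤
      star (Algebra.adjoin ℂ (range (chi (n := n))))
    refine Algebra.adjoin_le ?_
    rintro - ⟨k, rfl⟩
    refine Algebra.subset_adjoin ⟨-k, ?_⟩
    ext φ
    exact chi_neg k φ

lemma chiSubalgebra_coe (n : ℕ) :
    Subalgebra.toSubmodule (chiSubalgebra n).toSubalgebra = span ℂ (range (chi (n := n))) := by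
  apply Algebra.adjoin_eq_span_of_subset
  refine Subset.trans ?_ Submodule.subset_span
  intro x hx
  refine Submonoid.closure_induction (fun _ => id) ⟨0, chi_zero⟩ ?_ hx
  rintro - - - - ⟨k, rfl⟩ ⟨l, rfl⟩
  exact ⟨k + l, chi_add k l⟩

lemma chiSubalgebra_separatesPoints (n : ℕ) : (chiSubalgebra n).SeparatesPoints := by
  intro x y hxy
  obtain ⟨i, hi⟩ : ∃ i, x i ≠ y i := by
    by_contra h
    push_neg at h
    exact hxy (funext h)
  refine ⟨_, ⟨chi (Pi.single i 1), Algebra.subset_adjoin ⟨Pi.single i 1, rfl⟩, rfl⟩, ?_⟩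
  have hx : ∀ z : Torus n, chi (Pi.single i 1) z = fourier 1 (z i) := by
    intro z
    rw [chi_apply]
    rw [Finset.prod_eq_single i (fun j _ hj => by simp [Pi.single_eq_of_ne hj, fourier_zero])
      (fun h => absurd (Finset.mem_univ i) h)]
    simp
  dsimp only
  rw [hx, hx, fourier_one, fourier_one]
  contrapose! hi
  rw [Circle.coe_inj] at hi
  exact injective_toCircle (Fact.out : (0:ℝ) < 2 * Real.pi).ne' hi

lemma span_chi_closure_eq_top (n : ℕ) :
    (span ℂ (range (chi (n := n)))).topologicalClosure = ⊤ := by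
  rw [← chiSubalgebra_coe]
  exact congr_arg (Subalgebra.toSubmodule <| StarSubalgebra.toSubalgebra ·)
    (ContinuousMap.starSubalgebra_topologicalClosure_eq_top_of_separatesPoints _
      (chiSubalgebra_separatesPoints n))

end KronAux

namespace KronAux
variable {n : ℕ}

lemma chi_integrable (k : Fin n → ℤ) : Integrable (chi k) (volume : Measure (Torus n)) :=
  (chi k).continuous.integrable_of_hasCompactSupport (HasCompactSupport.of_compactSpace _)

lemma integral_chi_eq_zero {k : Fin n → ℤ} (hk : k ≠ 0) :
    ∫ φ : Torus n, chi k φ = 0 := by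
  obtain ⟨i₀, hi₀⟩ : ∃ i, k i ≠ 0 := by
    by_contra h; push_neg at h; exact hk (funext h)
  set c : Torus n :=
    Pi.single i₀ (((2 * Real.pi) / 2 / (k i₀) : ℝ) : AddCircle (2 * Real.pi)) with hc
  apply integral_eq_zero_of_add_right_eq_neg (g := c)
  intro φ
  simp only [chi_apply, Pi.add_apply]
  rw [← Finset.mul_prod_erase _ _ (Finset.mem_univ i₀),
      ← Finset.mul_prod_erase _ _ (Finset.mem_univ i₀)]
  have h2 : fourier (k i₀) (φ i₀ + c i₀) = -fourier (k i₀) (φ i₀) := by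
    rw [hc, Pi.single_eq_same]
    exact fourier_add_half_inv_index hi₀ (Fact.out : (0:ℝ) < 2 * Real.pi) _
  rw [h2, neg_mul]
  congr 1
  congr 1
  refine Finset.prod_congr rfl fun i hi => ?_
  have : c i = 0 := Pi.single_eq_of_ne (Finset.mem_erase.mp hi).1 _
  rw [this, add_zero]

end KronAux

namespace KronAux
variable {n : ℕ}

theorem dense_range_torusVec {ω : Fin n → ℝ} (hω : RationallyIndependent ω) :
    Dense (Set.range (torusVec ω)) := by
  by_contra hd
  obtain ⟨x, hx⟩ : ∃ x : Torus n, x ∉ closure (Set.range (torusVec ω)) := by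
    by_contra h; push_neg at h; exact hd h
  -- Urysohn function
  obtain ⟨f, hf0, hf1, hf01⟩ :=
    exists_continuous_zero_one_of_isClosed (isClosed_closure
      (s := Set.range (torusVec ω))) (isClosed_singleton (x := x))
      (by simpa [Set.disjoint_singleton_right] using hx)
  set g : C(Torus n, ℂ) := ⟨fun φ => (f φ : ℂ), Complex.continuous_ofReal.comp f.continuous⟩
    with hg
  have hfInt : Integrable f (volume : Measure (Torus n)) :=
    f.continuous.integrable_of_hasCompactSupport (HasCompactSupport.of_compactSpace _)
  have hgInt : Integrable g (volume : Measure (Torus n)) :=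
    g.continuous.integrable_of_hasCompactSupport (HasCompactSupport.of_compactSpace _)
  set δ : ℝ := ∫ φ, f φ ∂(volume : Measure (Torus n)) with hδdef
  have hδ : 0 < δ := by
    rw [hδdef]
    refine (integral_pos_iff_support_of_nonneg (fun φ => (hf01 φ).1) hfInt).mpr ?_
    refine IsOpen.measure_pos volume (f.continuous.isOpen_support) ⟨x, ?_⟩
    simp only [Function.mem_support]
    rw [hf1 rfl]
    norm_num
  set M : ℝ := (volume (Set.univ : Set (Torus n))).toReal with hMdef
  have hM : 0 < M := by
    rw [hMdef]
    refine ENNReal.toReal_pos ?_ (measure_ne_top _ _)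
    exact (IsOpen.measure_pos volume isOpen_univ ⟨x, trivial⟩).ne'
  set ε : ℝ := δ / (3 * M) with hεdef
  have hε : 0 < ε := by positivity
  -- approximate g by a trigonometric polynomial p
  have hgmem : g ∈ closure ((Submodule.span ℂ (Set.range (chi (n := n)))) : Set C(Torus n, ℂ)) := by
    rw [← Submodule.topologicalClosure_coe, span_chi_closure_eq_top]
    trivial
  obtain ⟨p, hpmem, hpg⟩ := SeminormedAddCommGroup.mem_closure_iff.mp hgmem ε hε
  obtain ⟨c, hp⟩ := Finsupp.mem_span_range_iff_exists_finsupp.mp hpmem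
  have hpφ : ∀ φ : Torus n, p φ = ∑ k ∈ c.support, c k * chi k φ := by
    intro φ
    rw [← hp, Finsupp.sum]
    rw [ContinuousMap.coe_sum, Finset.sum_apply]
    exact Finset.sum_congr rfl fun k _ => rfl
  have hpInt : Integrable p (volume : Measure (Torus n)) :=
    p.continuous.integrable_of_hasCompactSupport (HasCompactSupport.of_compactSpace _)
  -- space average of p
  have hIp : ∫ φ, p φ ∂(volume : Measure (Torus n)) = c 0 * M := by
    calc ∫ φ, p φ ∂(volume : Measure (Torus n))
        = ∫ φ, (∑ k ∈ c.support, c k * chi k φ) ∂(volume : Measure (Torus n)) := by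
          exact integral_congr_ae (Filter.Eventually.of_forall hpφ)
      _ = ∑ k ∈ c.support, ∫ φ, c k * chi k φ ∂(volume : Measure (Torus n)) :=
          integral_finset_sum _ fun k _ => (chi_integrable k).const_mul _
      _ = ∑ k ∈ c.support, c k * ∫ φ, chi k φ ∂(volume : Measure (Torus n)) := by
          exact Finset.sum_congr rfl fun k _ => integral_const_mul _ _
      _ = ∑ k ∈ c.support, (if k = 0 then c 0 * (M : ℂ) else 0) := by
          refine Finset.sum_congr rfl fun k _ => ?_
          by_cases hk : k = 0
          · subst hk
            simp only [if_pos rfl]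
            have : (chi 0 : C(Torus n, ℂ)) = 1 := chi_zero
            rw [this]
            simp only [ContinuousMap.one_apply]
            rw [integral_const]
            simp [hMdef, smul_eq_mul]
            exact Or.inl rfl
          · rw [if_neg hk, integral_chi_eq_zero hk, mul_zero]
      _ = c 0 * M := by
          rw [Finset.sum_ite_eq' c.support 0 (fun _ => c 0 * (M : ℂ))]
          split_ifs with h
          · rfl
          · rw [Finsupp.notMem_support_iff.mp h, zero_mul]
  -- space average comparison
  have hIg : ∫ φ, g φ ∂(volume : Measure (Torus n)) = (δ : ℂ) := by
    rw [hδdef]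
    exact integral_ofReal
  have hclose : ∀ φ : Torus n, ‖p φ - g φ‖ ≤ ε := by
    intro φ
    calc ‖p φ - g φ‖ = ‖(p - g) φ‖ := by rw [ContinuousMap.sub_apply]
      _ ≤ ‖p - g‖ := ContinuousMap.norm_coe_le_norm _ _
      _ = ‖g - p‖ := by rw [← norm_neg]; congr 1; abel
      _ ≤ ε := le_of_lt hpg
  have h1 : ‖(c 0 : ℂ) * M - δ‖ ≤ ε * M := by
    rw [← hIp, ← hIg, ← integral_sub hpInt hgInt]
    exact norm_integral_le_of_norm_le_const (Filter.Eventually.of_forall hclose)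
  -- time averages
  set a : (Fin n → ℤ) → ℝ := fun k => ∑ i, (k i : ℝ) * ω i with ha
  set E : (Fin n → ℤ) → ℝ → ℂ := fun k T' => ∫ t in (0:ℝ)..T', chi k (torusVec ω t) with hE
  have hEk : ∀ (k : Fin n → ℤ) (T' : ℝ), k ≠ 0 → ‖E k T'‖ ≤ 2 / |a k| := by
    intro k T' hk
    have hak : a k ≠ 0 := hω k hk
    have hcne : (a k : ℂ) * Complex.I ≠ 0 := by
      simp [Complex.ext_iff, hak, Complex.I_ne_zero]
    have : E k T' = ∫ t in (0:ℝ)..T', Complex.exp (((a k : ℂ) * Complex.I) * t) := by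
      rw [hE]
      refine intervalIntegral.integral_congr fun t _ => ?_
      rw [chi_torusVec]
      congr 1
      simp only [ha]
      push_cast
      ring
    rw [this, integral_exp_mul_complex hcne]
    rw [norm_div]
    have hnorm1 : ∀ s : ℝ, ‖Complex.exp ((a k : ℂ) * Complex.I * s)‖ = 1 := by
      intro s
      have : (a k : ℂ) * Complex.I * s = ((a k * s : ℝ) : ℂ) * Complex.I := by push_cast; ring
      rw [this, Complex.norm_exp_ofReal_mul_I]
    have hden : ‖(a k : ℂ) * Complex.I‖ = |a k| := by
      rw [norm_mul, Complex.norm_I, Complex.norm_real, Real.norm_eq_abs, mul_one]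
    rw [hden]
    gcongr
    calc ‖Complex.exp ((a k : ℂ) * Complex.I * T') - Complex.exp ((a k : ℂ) * Complex.I * 0)‖
        ≤ ‖Complex.exp ((a k : ℂ) * Complex.I * T')‖ +
            ‖Complex.exp ((a k : ℂ) * Complex.I * 0)‖ := norm_sub_le _ _
      _ = 2 := by rw [hnorm1, mul_zero, Complex.exp_zero, norm_one]; norm_num
  have hE0 : ∀ T' : ℝ, E 0 T' = T' := by
    intro T'
    simp only [hE]
    have : ∀ t : ℝ, chi (0 : Fin n → ℤ) (torusVec ω t) = 1 := by
      intro t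
      rw [show (chi 0 : C(Torus n, ℂ)) = 1 from chi_zero]
      rfl
    rw [intervalIntegral.integral_congr fun t _ => this t]
    simp
  set B : ℝ := ∑ k ∈ c.support.erase 0, ‖c k‖ * (2 / |a k|) with hB
  have hBnonneg : 0 ≤ B := Finset.sum_nonneg fun k hk => by positivity
  have hline : ∀ t : ℝ, g (torusVec ω t) = 0 := by
    intro t
    rw [hg]
    simp only [ContinuousMap.coe_mk]
    rw [hf0 (subset_closure ⟨t, rfl⟩)]
    norm_num
  have hpbound : ∀ t : ℝ, ‖p (torusVec ω t)‖ ≤ ε := by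
    intro t
    have := hclose (torusVec ω t)
    rwa [hline t, sub_zero] at this
  have hmain : ∀ T' : ℝ, 0 < T' → ‖(c 0 : ℂ)‖ ≤ ε + B / T' := by
    intro T' hT'
    have hIline : ∫ t in (0:ℝ)..T', p (torusVec ω t) = ∑ k ∈ c.support, c k * E k T' := by
      rw [intervalIntegral.integral_congr (g := fun t => ∑ k ∈ c.support,
        c k * chi k (torusVec ω t)) fun t _ => hpφ (torusVec ω t)]
      rw [intervalIntegral.integral_finset_sum]
      · exact Finset.sum_congr rfl fun k _ => intervalIntegral.integral_const_mul _ _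
      · intro k _
        have hlinecont : Continuous fun t : ℝ => torusVec ω t := by
          refine continuous_pi fun i => ?_
          exact (AddCircle.continuous_mk' _).comp (continuous_id.mul continuous_const)
        exact (continuous_const.mul ((chi k).continuous.comp hlinecont)).intervalIntegrable _ _
    have hsplit : (c 0 : ℂ) * T' =
        (∫ t in (0:ℝ)..T', p (torusVec ω t)) - ∑ k ∈ c.support.erase 0, c k * E k T' := by
      rw [hIline]
      by_cases h0 : (0 : Fin n → ℤ) ∈ c.support
      · rw [← Finset.add_sum_erase _ _ h0, hE0]
        ring
      · rw [Finsupp.notMem_support_iff.mp h0, Finset.erase_eq_of_notMem h0]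
        ring
    have hIbound : ‖∫ t in (0:ℝ)..T', p (torusVec ω t)‖ ≤ ε * T' := by
      have := intervalIntegral.norm_integral_le_of_norm_le_const
        (f := fun t => p (torusVec ω t)) (C := ε) (a := 0) (b := T')
        (fun t _ => hpbound t)
      rwa [sub_zero, abs_of_pos hT'] at this
    have hsum : ‖∑ k ∈ c.support.erase 0, c k * E k T'‖ ≤ B := by
      refine (norm_sum_le _ _).trans ?_
      rw [hB]
      refine Finset.sum_le_sum fun k hk => ?_
      rw [norm_mul]
      exact mul_le_mul_of_nonneg_left (hEk k T' (Finset.ne_of_mem_erase hk)) (norm_nonneg _)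
    have : ‖(c 0 : ℂ)‖ * T' ≤ ε * T' + B := by
      calc ‖(c 0 : ℂ)‖ * T' = ‖(c 0 : ℂ) * T'‖ := by
            rw [norm_mul, Complex.norm_real, Real.norm_eq_abs, abs_of_pos hT']
        _ ≤ ‖∫ t in (0:ℝ)..T', p (torusVec ω t)‖ +
              ‖∑ k ∈ c.support.erase 0, c k * E k T'‖ := by
            rw [hsplit]; exact norm_sub_le _ _
        _ ≤ ε * T' + B := add_le_add hIbound hsum
    calc ‖(c 0 : ℂ)‖ = ‖(c 0 : ℂ)‖ * T' / T' := by field_simp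
      _ ≤ (ε * T' + B) / T' := by gcongr
      _ = ε + B / T' := by field_simp
  have hc0 : ‖(c 0 : ℂ)‖ ≤ ε := by
    refine le_of_forall_pos_le_add fun η hη => ?_
    have hT' : (0:ℝ) < B / η + 1 := by positivity
    refine (hmain _ hT').trans ?_
    have : B / (B / η + 1) ≤ η := by
      rw [div_le_iff₀ hT']
      calc B = η * (B / η) := by field_simp
        _ ≤ η * (B / η + 1) := by nlinarith
    linarith
  -- contradiction
  have : δ ≤ 2 * (ε * M) := by
    calc δ = ‖(δ : ℂ)‖ := by rw [Complex.norm_real, Real.norm_eq_abs, abs_of_pos hδ]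
      _ = ‖((δ : ℂ) - (c 0 : ℂ) * M) + (c 0 : ℂ) * M‖ := by ring_nf
      _ ≤ ‖(δ : ℂ) - (c 0 : ℂ) * M‖ + ‖(c 0 : ℂ) * M‖ := norm_add_le _ _
      _ ≤ ε * M + ε * M := by
          refine add_le_add ?_ ?_
          · rw [← norm_neg]
            have : -((δ : ℂ) - (c 0 : ℂ) * M) = (c 0 : ℂ) * M - δ := by ring
            rw [this]
            exact h1
          · rw [norm_mul]
            calc ‖(c 0 : ℂ)‖ * ‖(M : ℂ)‖ ≤ ε * ‖(M : ℂ)‖ :=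
                  mul_le_mul_of_nonneg_right hc0 (norm_nonneg _)
              _ = ε * M := by rw [Complex.norm_real, Real.norm_eq_abs, abs_of_pos hM]
      _ = 2 * (ε * M) := by ring
  have hεM : ε * M = δ / 3 := by
    rw [hεdef]; field_simp
  rw [hεM] at this
  linarith

end KronAux


/-- in the setting of a continuous surjection `F : 𝕋ⁿ → K` semiconjugating a
quasi-periodic flow to a continuous flow `𝔊` on a compact Hausdorff space `K`, the set
`Λ = F⁻¹({F 0})` is a closed subgroup of `𝕋ⁿ` and `F` induces a homeomorphism `𝕋ⁿ/Λ ≃ K`. -/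
theorem fiber_is_closed_subgroup_and_quotient_homeo
    (n : ℕ) (ω : Fin n → ℝ) (hω : RationallyIndependent ω)
    (K : Type*) [TopologicalSpace K] [CompactSpace K] [T2Space K]
    (F : Torus n → K) (hFcont : Continuous F) (hFsurj : Function.Surjective F)
    (𝔊 : ℝ → K → K)
    (h𝔊cont : Continuous fun q : ℝ × K => 𝔊 q.1 q.2)
    (h𝔊zero : ∀ κ : K, 𝔊 0 κ = κ)
    (h𝔊add : ∀ t s : ℝ, ∀ κ : K, 𝔊 (t + s) κ = 𝔊 t (𝔊 s κ))
    (hconj : ∀ (φ : Torus n) (t : ℝ), F (φ + torusVec ω t) = 𝔊 t (F φ)) :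
    ∃ Λ : AddSubgroup (Torus n),
      (Λ : Set (Torus n)) = F ⁻¹' {F 0} ∧
      IsClosed (Λ : Set (Torus n)) ∧
      ∃ e : (Torus n ⧸ Λ) ≃ₜ K, ∀ φ : Torus n, e (QuotientAddGroup.mk φ) = F φ := by
  classical
  have hdense := KronAux.dense_range_torusVec hω
  have hinv : ∀ φ ψ χ : Torus n, F φ = F ψ → F (φ + χ) = F (ψ + χ) := by
    intro φ ψ χ h
    have hsub : Set.range (torusVec ω) ⊆ {χ : Torus n | F (φ + χ) = F (ψ + χ)} := by
      rintro - ⟨t, rfl⟩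
      simp only [Set.mem_setOf_eq]
      rw [hconj, hconj, h]
    have hclosed : IsClosed {χ : Torus n | F (φ + χ) = F (ψ + χ)} :=
      isClosed_eq (hFcont.comp (continuous_const.add continuous_id))
        (hFcont.comp (continuous_const.add continuous_id))
    exact closure_minimal hsub hclosed (by rw [hdense.closure_eq]; trivial)
  let Λ : AddSubgroup (Torus n) :=
    { carrier := F ⁻¹' {F 0}
      zero_mem' := rfl
      add_mem' := by
        intro a b ha hb
        have ha' : F a = F 0 := ha
        have hb' : F b = F 0 := hb
        show F (a + b) = F 0
        rw [hinv a 0 b ha', zero_add, hb']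
      neg_mem' := by
        intro a ha
        have ha' : F a = F 0 := ha
        show F (-a) = F 0
        have := hinv a 0 (-a) ha'
        rw [add_neg_cancel, zero_add] at this
        exact this.symm }
  have hresp : ∀ a b : Torus n, QuotientAddGroup.leftRel Λ a b → F a = F b := by
    intro a b hab
    have hmem : -a + b ∈ Λ := (QuotientAddGroup.leftRel_apply).mp hab
    have h0 : F (-a + b) = F 0 := hmem
    have := hinv (-a + b) 0 a h0
    rw [zero_add, show -a + b + a = b by abel] at this
    exact this.symm
  let e0 : Torus n ⧸ Λ → K := Quotient.lift F hresp
  have he0 : ∀ φ : Torus n, e0 (QuotientAddGroup.mk φ) = F φ := fun φ => rfl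
  have hbij : Function.Bijective e0 := by
    constructor
    · intro q1 q2
      refine Quotient.inductionOn₂ q1 q2 ?_
      intro a b h
      have hab : F a = F b := h
      have : -a + b ∈ Λ := by
        show F (-a + b) = F 0
        have := hinv b a (-a) hab.symm
        rw [add_neg_cancel, show b + -a = -a + b by abel] at this
        exact this
      exact Quotient.sound ((QuotientAddGroup.leftRel_apply).mpr this)
    · intro κ
      obtain ⟨φ, rfl⟩ := hFsurj κ
      exact ⟨QuotientAddGroup.mk φ, he0 φ⟩
  have hcont : Continuous e0 := Continuous.quotient_lift hFcont hresp
  let e : (Torus n ⧸ Λ) ≃ₜ K :=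
    Continuous.homeoOfEquivCompactToT2 (f := Equiv.ofBijective e0 hbij) hcont
  exact ⟨Λ, rfl, (isClosed_singleton).preimage hFcont, e, fun φ => he0 φ⟩
end

section
/- Let K be a compact Hausdorff topological space, n ∈ ℤ₊, ω ∈ ℝⁿ rationally independent, F: 𝕋ⁿ → K a surjective continuous map, and 𝔊 a continuous action of ℝ on K with F(φ + ωt) = 𝔊^t(F(φ)) for all φ ∈ 𝕋ⁿ and t ∈ ℝ. Let J: K → K be a continuous involution that reverses the flow, i.e. J(𝔊^t(κ)) = 𝔊^{−t}(J(κ)) for all κ ∈ K and t ∈ ℝ. Then J has at least one fixed point in K; moreover, if J has at most one fixed point, then K consists of a single point κ₀, which satisfies 𝔊^t(κ₀) = κ₀ for all t ∈ ℝ and J(κ₀) = κ₀. -/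
open scoped BigOperators

open Set Submodule Filter

section Aux

/-- A `ℤ`-submodule of a finite-dimensional real vector space that is closed and contains
no ray is discrete. -/
lemma discreteTopology_of_no_ray {E : Type*} [NormedAddCommGroup E] [NormedSpace ℝ E]
    [FiniteDimensional ℝ E] (L : Submodule ℤ E) (hcl : IsClosed (L : Set E))
    (hray : ∀ x : E, (∀ t : ℝ, t • x ∈ (L : Set E)) → x = 0) :
    DiscreteTopology L := by
  have key : ∃ ε > (0:ℝ), ∀ x : E, x ∈ L → ‖x‖ < ε → x = 0 := by
    by_contra h
    push_neg at h
    have hseq : ∀ k : ℕ, ∃ x : E, x ∈ L ∧ ‖x‖ < 1/(k+1) ∧ x ≠ 0 := by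
      intro k
      obtain ⟨x, hxL, hxlt, hxne⟩ := h (1/(k+1)) (by positivity)
      exact ⟨x, hxL, hxlt, hxne⟩
    choose x hxL hxlt hxne using hseq
    have hxnorm : ∀ k, (0:ℝ) < ‖x k‖ := fun k => norm_pos_iff.mpr (hxne k)
    set u : ℕ → E := fun k => ‖x k‖⁻¹ • x k with hu
    have husph : ∀ k, u k ∈ Metric.sphere (0:E) 1 := by
      intro k
      simp only [u, Metric.mem_sphere, dist_zero_right, norm_smul, norm_inv, norm_norm]
      exact inv_mul_cancel₀ (hxnorm k).ne'
    obtain ⟨v, hvmem, φ, hφmono, hφtend⟩ := (isCompact_sphere (0:E) 1).tendsto_subseq husph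
    have hvnorm : ‖v‖ = 1 := by simpa using hvmem
    have hxk0 : Tendsto (fun k => ‖x (φ k)‖) atTop (nhds 0) := by
      apply squeeze_zero (fun k => (norm_nonneg _)) (fun k => (hxlt (φ k)).le.trans ?_)
      · exact tendsto_one_div_add_atTop_nhds_zero_nat
      · have hk1 : k ≤ φ k := hφmono.le_apply
        have : (k:ℝ) + 1 ≤ (φ k : ℝ) + 1 := add_le_add_left (Nat.cast_le.mpr hk1) 1
        exact one_div_le_one_div_of_le (by positivity) this
    have hv0 : v = 0 := by
      apply hray
      intro t
      set c : ℕ → ℝ := fun k => ((⌊t / ‖x (φ k)‖⌋ : ℤ) : ℝ) * ‖x (φ k)‖ with hc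
      have hcbound : ∀ k, |c k - t| ≤ ‖x (φ k)‖ := by
        intro k
        set r := ‖x (φ k)‖
        have hr : 0 < r := hxnorm (φ k)
        have h1 : c k - t = ((⌊t / r⌋ : ℝ) - t / r) * r := by
          field_simp [hc]
          change ((⌊t / r⌋ : ℤ) : ℝ) * r - t = _
          ring
        rw [h1, abs_mul, abs_of_pos hr]
        have h2 : |((⌊t / r⌋ : ℝ) - t / r)| ≤ 1 := by
          rw [abs_le]
          constructor
          · linarith [Int.sub_one_lt_floor (t / r)]
          · linarith [Int.floor_le (t / r)]
        nlinarith [hr.le]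
      have hctend : Tendsto c atTop (nhds t) := by
        have h0 : Tendsto (fun k => c k - t) atTop (nhds 0) :=
          squeeze_zero_norm hcbound hxk0
        have := h0.add_const t
        simpa using this
      have heq : ∀ k, (⌊t / ‖x (φ k)‖⌋ : ℤ) • x (φ k) = c k • u (φ k) := by
        intro k
        have hr : (0:ℝ) < ‖x (φ k)‖ := hxnorm (φ k)
        rw [hu, smul_smul, hc]
        rw [mul_assoc, mul_inv_cancel₀ hr.ne', mul_one]
        rw [← Int.cast_smul_eq_zsmul ℝ]
      have hmem : ∀ k, c k • u (φ k) ∈ (L : Set E) := by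
        intro k
        rw [← heq k]
        exact L.smul_mem _ (hxL (φ k))
      have htend : Tendsto (fun k => c k • u (φ k)) atTop (nhds (t • v)) :=
        hctend.smul hφtend
      exact hcl.mem_of_tendsto htend (Eventually.of_forall hmem)
    rw [hv0] at hvnorm; norm_num at hvnorm
  obtain ⟨ε, hε, hkey⟩ := key
  rw [discreteTopology_iff_isOpen_singleton_zero]
  have hset : {(0 : L)} = (fun y : L => (y : E)) ⁻¹' Metric.ball (0:E) ε := by
    ext y
    simp only [Set.mem_singleton_iff, Set.mem_preimage, Metric.mem_ball, dist_zero_right]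
    constructor
    · rintro rfl; simpa using hε
    · intro hy
      exact Subtype.ext (hkey _ y.2 hy)
  rw [hset]
  exact Metric.isOpen_ball.preimage continuous_subtype_val

end Aux

section Density

variable {n : ℕ}

lemma dense_lineLat (ω : Fin n → ℝ) (hω : RationallyIndependent ω) :
    Dense {x : Fin n → ℝ | ∃ (t : ℝ) (m : Fin n → ℤ),
      x = t • ω + fun i => (2*Real.pi) * (m i : ℝ)} := by
  classical
  have h2π : (2*Real.pi) ≠ 0 := by positivity
  set S : AddSubgroup (Fin n → ℝ) :=
    { carrier := {x | ∃ (t : ℝ) (m : Fin n → ℤ), x = t • ω + fun i => (2*Real.pi) * (m i : ℝ)}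
      zero_mem' := ⟨0, 0, by funext i; simp⟩
      add_mem' := by
        rintro a b ⟨t, m, rfl⟩ ⟨s, l, rfl⟩
        refine ⟨t + s, m + l, ?_⟩
        funext i
        simp only [Pi.add_apply, Pi.smul_apply, smul_eq_mul, add_smul]
        push_cast
        ring
      neg_mem' := by
        rintro a ⟨t, m, rfl⟩
        refine ⟨-t, -m, ?_⟩
        funext i
        simp only [Pi.neg_apply, Pi.add_apply, Pi.smul_apply, smul_eq_mul, neg_smul]
        push_cast
        ring }
  show Dense (S : Set (Fin n → ℝ))
  set V : AddSubgroup (Fin n → ℝ) := S.topologicalClosure with hVdef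
  have hVcoe : (V : Set (Fin n → ℝ)) = closure (S : Set (Fin n → ℝ)) := rfl
  suffices hVtop : ∀ x, x ∈ V by
    intro x
    rw [← hVcoe]
    exact hVtop x
  have hSV : ∀ x ∈ S, x ∈ V := fun x hx => S.le_topologicalClosure hx
  have hVclosed : IsClosed (V : Set (Fin n → ℝ)) := S.isClosed_topologicalClosure
  set W : Submodule ℝ (Fin n → ℝ) :=
    { carrier := {x | ∀ t : ℝ, t • x ∈ V}
      zero_mem' := fun t => by simpa using V.zero_mem
      add_mem' := by intro a b ha hb t; rw [smul_add]; exact V.add_mem (ha t) (hb t)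
      smul_mem' := by intro c a ha t; rw [smul_smul]; exact ha (t * c) } with hWdef
  obtain ⟨C, hC⟩ := Submodule.exists_isCompl W
  set p : (Fin n → ℝ) →ₗ[ℝ] C := C.linearProjOfIsCompl W hC.symm with hpdef
  have hWV : ∀ x ∈ W, x ∈ V := fun x hx => by simpa using hx 1
  have hpleft : ∀ u : C, p (u : Fin n → ℝ) = u :=
    fun u => Submodule.linearProjOfIsCompl_apply_left hC.symm u
  have hpmem : ∀ v ∈ V, ((p v : Fin n → ℝ)) ∈ V := by
    intro v hv
    have hker : v - (p v : Fin n → ℝ) ∈ W := by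
      have h0 : p (v - (p v : Fin n → ℝ)) = 0 := by
        rw [map_sub, hpleft, sub_self]
      have := (Submodule.linearProjOfIsCompl_ker (p := C) (q := W) hC.symm) ▸
        (LinearMap.mem_ker.mpr h0)
      exact this
    have := V.sub_mem hv (hWV _ hker)
    simpa using this
  set L : Submodule ℤ C :=
    { carrier := {u : C | (u : Fin n → ℝ) ∈ V}
      zero_mem' := by simpa using V.zero_mem
      add_mem' := by
        intro a b ha hb
        have : ((a + b : C) : Fin n → ℝ) = (a : Fin n → ℝ) + (b : Fin n → ℝ) := rfl
        show ((a + b : C) : Fin n → ℝ) ∈ V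
        rw [this]; exact V.add_mem ha hb
      smul_mem' := by
        intro z u hu
        show ((z • u : C) : Fin n → ℝ) ∈ V
        have : ((z • u : C) : Fin n → ℝ) = z • (u : Fin n → ℝ) := by
          exact map_zsmul C.subtype z u
        rw [this]
        exact V.zsmul_mem hu z } with hLdef
  have hLclosed : IsClosed (L : Set C) := by
    have : (L : Set C) = (fun u : C => (u : Fin n → ℝ)) ⁻¹' (V : Set _) := rfl
    rw [this]
    exact hVclosed.preimage continuous_subtype_val
  haveI hLdisc : DiscreteTopology L := by
    apply discreteTopology_of_no_ray L hLclosed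
    intro u hu
    have huW : (u : Fin n → ℝ) ∈ W := by
      intro t
      have := hu t
      have hcoe : ((t • u : C) : Fin n → ℝ) = t • (u : Fin n → ℝ) := rfl
      rwa [SetLike.mem_coe, hLdef, Submodule.mem_mk, AddSubmonoid.mem_mk,
        AddSubsemigroup.mem_mk, Set.mem_setOf_eq, hcoe] at this
    have : (u : Fin n → ℝ) = 0 := Submodule.disjoint_def.mp hC.disjoint _ huW u.2
    exact Subtype.ext this
  set lam : Fin n → (Fin n → ℝ) := fun i => fun j => (2*Real.pi) * (((Pi.single i 1 : Fin n → ℤ)) j : ℝ)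
    with hlam
  have hlamS : ∀ i, lam i ∈ S := by
    intro i
    exact ⟨0, Pi.single i 1, by funext j; simp [hlam]⟩
  have hdecomp : ∀ x : Fin n → ℝ, x = ∑ i, (x i * (2*Real.pi)⁻¹) • lam i := by
    intro x
    funext j
    rw [Finset.sum_apply]
    have : ∀ i, ((x i * (2*Real.pi)⁻¹) • lam i) j
        = if j = i then x i else 0 := by
      intro i
      simp only [Pi.smul_apply, hlam, smul_eq_mul, Pi.single_apply]
      by_cases h : j = i
      · simp only [h, if_pos rfl, ↓reduceIte, Int.cast_one, mul_one]
        field_simp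
      · simp [h]
    simp only [this]
    rw [Finset.sum_ite_eq]
    simp
  have hspanV : span ℝ (V : Set (Fin n → ℝ)) = ⊤ := by
    rw [eq_top_iff]
    rintro x -
    rw [hdecomp x]
    apply Submodule.sum_mem
    intro i _
    exact Submodule.smul_mem _ _ (Submodule.subset_span (hSV _ (hlamS i)))
  haveI hLlat : IsZLattice ℝ L := by
    constructor
    rw [eq_top_iff]
    rintro u -
    have hmem : (u : Fin n → ℝ) ∈ span ℝ (V : Set _) := by rw [hspanV]; trivial
    have hu : u = p (u : Fin n → ℝ) := (hpleft u).symm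
    rw [hu]
    have h1 : p (u : Fin n → ℝ) ∈ Submodule.map p (span ℝ (V : Set _)) :=
      Submodule.mem_map_of_mem hmem
    rw [Submodule.map_span] at h1
    refine Submodule.span_mono ?_ h1
    rintro y ⟨v, hv, rfl⟩
    exact hpmem v hv
  by_cases hCbot : C = ⊥
  · intro x
    have hWtop : W = ⊤ := by
      have := hC.sup_eq_top
      rwa [hCbot, sup_bot_eq] at this
    have hxW : x ∈ W := by rw [hWtop]; trivial
    exact hWV x hxW
  · exfalso
    haveI : Module.Finite ℤ L := instModuleFinite_of_discrete_submodule L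
    haveI : Module.Free ℤ L := instModuleFree_of_discrete_submodule L
    set ι := Module.Free.ChooseBasisIndex ℤ L with hι
    set b : Module.Basis ι ℤ L := Module.Free.chooseBasis ℤ L with hb
    set B := b.ofZLatticeBasis ℝ L with hB
    haveI : Nonempty ι := by
      by_contra hne
      haveI : IsEmpty ι := not_nonempty_iff.mp hne
      apply hCbot
      rw [Submodule.eq_bot_iff]
      intro y hy
      have : (⟨y, hy⟩ : C) = 0 := by
        apply B.repr.injective
        exact Subsingleton.elim _ _
      simpa using congrArg (fun u : C => (u : Fin n → ℝ)) this
    obtain ⟨j₀⟩ := ‹Nonempty ι›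
    set g : C →ₗ[ℝ] ℝ := B.coord j₀ with hg
    set f : (Fin n → ℝ) →ₗ[ℝ] ℝ := g.comp p with hf
    have hfV : ∀ v ∈ V, ∃ z : ℤ, f v = (z : ℝ) := by
      intro v hv
      have h1 : p v ∈ L := hpmem v hv
      refine ⟨b.repr ⟨p v, h1⟩ j₀, ?_⟩
      show g (p v) = _
      rw [hg, Module.Basis.coord_apply]
      have h2 := b.ofZLatticeBasis_repr_apply ℝ L (⟨p v, h1⟩ : L) j₀
      rw [← hB] at h2
      simpa using h2
    have hfω : f ω = 0 := by
      by_contra hne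
      have hmem : ((f ω)⁻¹ * (1/2)) • ω ∈ V := by
        apply hSV
        exact ⟨(f ω)⁻¹ * (1/2), 0, by funext i; simp⟩
      obtain ⟨z, hz⟩ := hfV _ hmem
      rw [map_smul, smul_eq_mul] at hz
      have h12 : (z : ℝ) = 1/2 := by
        rw [← hz]; field_simp
      have h2 : ((2*z : ℤ) : ℝ) = ((1:ℤ) : ℝ) := by push_cast; rw [h12]; ring
      have := Int.cast_injective h2
      omega
    have hlamV : ∀ i, lam i ∈ V := fun i => hSV _ (hlamS i)
    choose k hk using fun i => hfV _ (hlamV i)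
    have hsum : ∑ i, (k i : ℝ) * ω i = 0 := by
      have h1 : ∑ i, ω i • lam i = (2*Real.pi) • ω := by
        funext j
        rw [Finset.sum_apply]
        have : ∀ i, (ω i • lam i) j = if j = i then (2*Real.pi) * ω i else 0 := by
          intro i
          simp only [Pi.smul_apply, hlam, smul_eq_mul, Pi.single_apply]
          by_cases h : j = i
          · simp [h]; ring
          · simp [h]
        simp only [this]
        rw [Finset.sum_ite_eq]
        simp [mul_comm]
      calc ∑ i, (k i : ℝ) * ω i = ∑ i, f (ω i • lam i) := by
            apply Finset.sum_congr rfl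
            intro i _
            rw [map_smul, smul_eq_mul, ← hk i, mul_comm]
        _ = f (∑ i, ω i • lam i) := (map_sum f _ _).symm
        _ = f ((2*Real.pi) • ω) := by rw [h1]
        _ = (2*Real.pi) * f ω := by rw [map_smul, smul_eq_mul]
        _ = 0 := by rw [hfω, mul_zero]
    have hkne : k ≠ 0 := by
      intro hk0
      have hflam : ∀ i, f (lam i) = 0 := by
        intro i
        rw [hk i, hk0]
        simp
      have hfx : ∀ x, f x = 0 := by
        intro x
        rw [hdecomp x, map_sum]
        simp only [map_smul, hflam, smul_eq_mul, mul_zero]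
        exact Finset.sum_const_zero
      have h1 : f ((B j₀ : C) : Fin n → ℝ) = 1 := by
        show g (p _) = 1
        rw [hpleft (B j₀), hg, Module.Basis.coord_apply, Module.Basis.repr_self]
        simp
      rw [hfx] at h1
      norm_num at h1
    exact hω k hkne hsum

noncomputable def torusMk (n : ℕ) (x : Fin n → ℝ) : Torus n :=
  fun i => ((x i : ℝ) : AddCircle (2 * Real.pi))

lemma continuous_torusMk (n : ℕ) : Continuous (torusMk n) :=
  continuous_pi fun i => (AddCircle.continuous_mk' _).comp (continuous_apply i)

lemma surjective_torusMk (n : ℕ) : Function.Surjective (torusMk n) := by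
  intro φ
  have h : ∀ i, ∃ x : ℝ, ((x : ℝ) : AddCircle (2 * Real.pi)) = φ i :=
    fun i => QuotientAddGroup.mk_surjective (φ i)
  choose x hx using h
  exact ⟨x, funext hx⟩

lemma coe_two_pi_int_mul (m : ℤ) : (((2*Real.pi) * (m:ℝ) : ℝ) : AddCircle (2*Real.pi)) = 0 := by
  rw [AddCircle.coe_eq_zero_iff]
  exact ⟨m, by rw [zsmul_eq_mul]; ring⟩

lemma dense_torusVec (ω : Fin n → ℝ) (hω : RationallyIndependent ω) :
    Dense (Set.range (torusVec ω)) := by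
  have hd := dense_lineLat ω hω
  have himg := ((surjective_torusMk n).denseRange).dense_image (continuous_torusMk n) hd
  apply Dense.mono ?_ himg
  rintro _ ⟨x, ⟨t, m, rfl⟩, rfl⟩
  refine ⟨t, ?_⟩
  funext i
  show ((t * ω i : ℝ) : AddCircle (2*Real.pi)) = _
  have : torusMk n (t • ω + fun i => (2*Real.pi) * (m i : ℝ)) i
      = ((t * ω i + (2*Real.pi) * (m i : ℝ) : ℝ) : AddCircle (2*Real.pi)) := rfl
  rw [this, AddCircle.coe_add, coe_two_pi_int_mul, add_zero]

lemma dense_torsion (n : ℕ) : Dense {χ : Torus n | ∃ k : ℕ, (2^k : ℕ) • χ = 0} := by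
  classical
  have hcoord : Dense {y : AddCircle (2*Real.pi) | ∃ k : ℕ, (2^k : ℕ) • y = 0} := by
    set T : AddSubgroup ℝ :=
      { carrier := {r : ℝ | ∃ (k : ℕ) (m : ℤ), r = (2*Real.pi) * (m:ℝ) / 2^k}
        zero_mem' := ⟨0, 0, by simp⟩
        add_mem' := by
          rintro a b ⟨k, m, rfl⟩ ⟨k', m', rfl⟩
          refine ⟨k + k', m * 2^k' + m' * 2^k, ?_⟩
          have h1 : (2:ℝ)^k ≠ 0 := by positivity
          have h2 : (2:ℝ)^k' ≠ 0 := by positivity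
          field_simp
          push_cast
          ring
        neg_mem' := by
          rintro a ⟨k, m, rfl⟩
          exact ⟨k, -m, by push_cast; ring⟩ }
    have hT : Dense (T : Set ℝ) := by
      apply T.dense_of_not_isolated_zero
      intro ε hε
      obtain ⟨k, hk⟩ := pow_unbounded_of_one_lt ((2*Real.pi)/ε) (one_lt_two (α := ℝ))
      refine ⟨(2*Real.pi) / 2^k, ⟨k, 1, by push_cast; ring⟩, ?_, ?_⟩
      · positivity
      · rw [div_lt_iff₀ (by positivity)]
        rw [div_lt_iff₀ hε] at hk
        linarith
    have himg := ((QuotientAddGroup.mk_surjective (s := AddSubgroup.zmultiples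
        (2*Real.pi))).denseRange).dense_image (AddCircle.continuous_mk' _) hT
    apply Dense.mono ?_ himg
    rintro _ ⟨r, ⟨k, m, rfl⟩, rfl⟩
    refine ⟨k, ?_⟩
    have h1 : (2:ℝ)^k ≠ 0 := by positivity
    show (2^k : ℕ) • (((2*Real.pi) * (m:ℝ) / 2^k : ℝ) : AddCircle (2*Real.pi)) = 0
    rw [← AddCircle.coe_nsmul]
    have h2 : (2^k : ℕ) • ((2*Real.pi) * (m:ℝ) / 2^k : ℝ) = (2*Real.pi) * (m:ℝ) := by
      rw [nsmul_eq_mul]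
      push_cast
      field_simp
    rw [h2, coe_two_pi_int_mul]
  have hpi : Dense (Set.pi Set.univ
      (fun _ : Fin n => {y : AddCircle (2*Real.pi) | ∃ k : ℕ, (2^k : ℕ) • y = 0})) :=
    dense_pi Set.univ (fun i _ => hcoord)
  apply Dense.mono ?_ hpi
  intro χ hχ
  choose kk hkk using fun i => hχ i (Set.mem_univ i)
  refine ⟨Finset.univ.sup kk, ?_⟩
  funext i
  have hle : kk i ≤ Finset.univ.sup kk := Finset.le_sup (Finset.mem_univ i)
  have : (2^(Finset.univ.sup kk) : ℕ) = 2^(Finset.univ.sup kk - kk i) * 2^(kk i) := by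
    rw [← pow_add]
    congr 1
    omega
  show (2^(Finset.univ.sup kk) : ℕ) • χ i = 0
  rw [this, mul_smul, hkk i, smul_zero]

end Density

/-- let `K` be a compact Hausdorff factor (via `F : 𝕋ⁿ → K`) of a quasi-periodic
flow, carrying the induced continuous flow `𝔊`, and let `J : K → K` be a continuous involution
reversing the flow (`J ∘ 𝔊^t = 𝔊^{-t} ∘ J`).  Then `J` has at least one fixed point; moreover,
if `J` has at most one fixed point, then `K` is a single point `κ₀`, fixed by the flow and
by `J`. -/
theorem reversing_involution_on_factor_has_fixed_point
    (n : ℕ) (ω : Fin n → ℝ) (hω : RationallyIndependent ω)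
    (K : Type*) [TopologicalSpace K] [CompactSpace K] [T2Space K]
    (F : Torus n → K) (hFcont : Continuous F) (hFsurj : Function.Surjective F)
    (𝔊 : ℝ → K → K)
    (h𝔊cont : Continuous fun q : ℝ × K => 𝔊 q.1 q.2)
    (h𝔊zero : ∀ κ : K, 𝔊 0 κ = κ)
    (h𝔊add : ∀ t s : ℝ, ∀ κ : K, 𝔊 (t + s) κ = 𝔊 t (𝔊 s κ))
    (hconj : ∀ (φ : Torus n) (t : ℝ), F (φ + torusVec ω t) = 𝔊 t (F φ))
    (J : K → K) (hJcont : Continuous J) (hJinv : Function.Involutive J)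
    (hJrev : ∀ (κ : K) (t : ℝ), J (𝔊 t κ) = 𝔊 (-t) (J κ)) :
    (∃ κ : K, J κ = κ) ∧
    ({κ : K | J κ = κ}.Subsingleton →
      ∃ κ₀ : K, (∀ κ : K, κ = κ₀) ∧ (∀ t : ℝ, 𝔊 t κ₀ = κ₀) ∧ J κ₀ = κ₀) := by
  classical
  have hdense : Dense (Set.range (torusVec ω)) := dense_torusVec ω hω
  obtain ⟨ψ, hψ⟩ := hFsurj (J (F 0))
  have htorusVec_neg : ∀ t : ℝ, torusVec ω (-t) = - torusVec ω t := by
    intro t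
    funext i
    show (((-t) * ω i : ℝ) : AddCircle (2*Real.pi)) = _
    rw [neg_mul, AddCircle.coe_neg]
    rfl
  -- Step 1: J ∘ F = F ∘ (ψ - ·)
  have hJF : ∀ φ : Torus n, J (F φ) = F (ψ - φ) := by
    have hc1 : Continuous fun φ : Torus n => J (F φ) := hJcont.comp hFcont
    have hc2 : Continuous fun φ : Torus n => F (ψ - φ) :=
      hFcont.comp (continuous_const.sub continuous_id)
    have heq : Set.EqOn (fun φ : Torus n => J (F φ)) (fun φ : Torus n => F (ψ - φ))
        (Set.range (torusVec ω)) := by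
      rintro _ ⟨t, rfl⟩
      show J (F (torusVec ω t)) = F (ψ - torusVec ω t)
      have h1 : F (torusVec ω t) = 𝔊 t (F 0) := by rw [← hconj 0 t, zero_add]
      calc J (F (torusVec ω t)) = J (𝔊 t (F 0)) := by rw [h1]
        _ = 𝔊 (-t) (J (F 0)) := hJrev _ t
        _ = 𝔊 (-t) (F ψ) := by rw [hψ]
        _ = F (ψ + torusVec ω (-t)) := (hconj ψ (-t)).symm
        _ = F (ψ - torusVec ω t) := by rw [htorusVec_neg, sub_eq_add_neg]
    have := Continuous.ext_on hdense hc1 hc2 heq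
    exact fun φ => congrFun this φ
  -- Step 2: fibers of F are translation invariant
  have htrans : ∀ φ φ' : Torus n, F φ = F φ' → ∀ χ, F (φ + χ) = F (φ' + χ) := by
    intro φ φ' h
    have hc1 : Continuous fun χ : Torus n => F (φ + χ) :=
      hFcont.comp (continuous_const.add continuous_id)
    have hc2 : Continuous fun χ : Torus n => F (φ' + χ) :=
      hFcont.comp (continuous_const.add continuous_id)
    have heq : Set.EqOn (fun χ : Torus n => F (φ + χ)) (fun χ : Torus n => F (φ' + χ))
        (Set.range (torusVec ω)) := by
      rintro _ ⟨t, rfl⟩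
      show F (φ + torusVec ω t) = F (φ' + torusVec ω t)
      rw [hconj φ t, hconj φ' t, h]
    have := Continuous.ext_on hdense hc1 hc2 heq
    exact fun χ => congrFun this χ
  -- the half point
  obtain ⟨r, hr⟩ := surjective_torusMk n ψ
  set φ₀ : Torus n := torusMk n (fun i => r i / 2) with hφ₀def
  have hφ₀ : φ₀ + φ₀ = ψ := by
    rw [← hr]
    funext i
    show ((r i / 2 : ℝ) : AddCircle (2*Real.pi)) + ((r i / 2 : ℝ) : AddCircle (2*Real.pi))
      = ((r i : ℝ) : AddCircle (2*Real.pi))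
    rw [← AddCircle.coe_add, add_halves]
  have hψφ₀ : ψ - φ₀ = φ₀ := by rw [← hφ₀, add_sub_cancel_right]
  have hfix0 : J (F φ₀) = F φ₀ := by
    rw [hJF, hψφ₀]
  refine ⟨⟨F φ₀, hfix0⟩, ?_⟩
  intro hsub
  set κ₀ := F φ₀ with hκ₀
  have hhalf : ∀ χ : Torus n, F (φ₀ + (χ + χ)) = κ₀ → F (φ₀ + χ) = κ₀ := by
    intro χ h
    have h1 : F (φ₀ + χ) = F (φ₀ - χ) := by
      have h2 := htrans (φ₀ + (χ + χ)) φ₀ h (-χ)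
      have e1 : φ₀ + (χ + χ) + (-χ) = φ₀ + χ := by abel
      have e2 : φ₀ + (-χ) = φ₀ - χ := by abel
      rwa [e1, e2] at h2
    have h2 : J (F (φ₀ + χ)) = F (φ₀ + χ) := by
      rw [hJF]
      have e3 : ψ - (φ₀ + χ) = φ₀ - χ := by rw [← hφ₀]; abel
      rw [e3, ← h1]
    have h3 : F (φ₀ + χ) ∈ {κ : K | J κ = κ} := h2
    have h4 : F φ₀ ∈ {κ : K | J κ = κ} := hfix0
    exact hsub h3 h4
  have htor : ∀ (k : ℕ) (χ : Torus n), (2^k : ℕ) • χ = 0 → F (φ₀ + χ) = κ₀ := by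
    intro k
    induction k with
    | zero =>
      intro χ h
      simp only [pow_zero, one_smul] at h
      rw [h, add_zero]
    | succ k ih =>
      intro χ h
      apply hhalf
      apply ih
      have : (2^k : ℕ) • (χ + χ) = (2^(k+1) : ℕ) • χ := by
        rw [← two_smul ℕ χ, smul_smul, pow_succ]
      rw [this, h]
  have hall : ∀ χ : Torus n, F (φ₀ + χ) = κ₀ := by
    have hclosed : IsClosed {χ : Torus n | F (φ₀ + χ) = κ₀} :=
      isClosed_eq (hFcont.comp (continuous_add_left φ₀)) continuous_const
    have hsubset : {χ : Torus n | ∃ k : ℕ, (2^k : ℕ) • χ = 0} ⊆ {χ : Torus n | F (φ₀ + χ) = κ₀} := by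
      rintro χ ⟨k, hk⟩
      exact htor k χ hk
    have hcl : closure {χ : Torus n | ∃ k : ℕ, (2^k : ℕ) • χ = 0}
        ⊆ {χ : Torus n | F (φ₀ + χ) = κ₀} := by
      rw [← hclosed.closure_eq]
      exact closure_mono hsubset
    intro χ
    exact hcl (dense_torsion n χ)
  refine ⟨κ₀, ?_, ?_, hfix0⟩
  · intro κ
    obtain ⟨φ, rfl⟩ := hFsurj κ
    have := hall (φ - φ₀)
    rwa [add_sub_cancel] at this
  · intro t
    rw [hκ₀, ← hconj φ₀ t]
    exact hall (torusVec ω t)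
end

section
/- Let s ∈ ℕ, n ∈ ℤ₊, ν ∈ ℤ₊, Q ∈ ℕ, L ∈ ℕ, let 𝔄 ⊆ ℝ^s be open, and let Ω: 𝔄 → ℝⁿ and β: 𝔄 → ℝ^ν be C^Q-smooth mappings. If the pair of mappings (Ω, β) is affinely (Q,L)-nondegenerate at a point μ ∈ 𝔄, then it is affinely (Q,L)-nondegenerate at every point μ' ∈ 𝔄 sufficiently close to μ; in other words, the set of points of 𝔄 at which the pair (Ω, β) is affinely (Q,L)-nondegenerate is open. -/
open scoped BigOperators
open Set Filter Topology Metric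
/-- The directional derivative of order `J` of `H` at `μ` in the direction `u`:
`d^J/dt^J H(μ + t u) |_{t=0}`.  By Taylor's formula this equals
`J! Σ_{|q|=J} D^q H(μ) u^q / q!`. -/
noncomputable def dirDeriv (s : ℕ) (J : ℕ) (H : (Fin s → ℝ) → ℝ) (μ u : Fin s → ℝ) : ℝ :=
  iteratedDeriv J (fun t : ℝ => H (μ + t • u)) 0

/-- The quantity `ρ^Q(μ)` of Definition 2.2 of the paper:
`min_{‖e‖=1} max_{1≤J≤Q} max_{‖u‖=1} |⟨d^J/dt^J Ω(μ+tu)|_{t=0}, e⟩|`. -/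
noncomputable def rhoQ {s n : ℕ} (Q : ℕ) (Ω : (Fin s → ℝ) → Fin n → ℝ) (μ : Fin s → ℝ) : ℝ :=
  sInf { r : ℝ | ∃ e : Fin n → ℝ, (∑ i, e i ^ 2) = 1 ∧
    r = sSup { v : ℝ | ∃ J : ℕ, 1 ≤ J ∧ J ≤ Q ∧ ∃ u : Fin s → ℝ, (∑ l, u l ^ 2) = 1 ∧
      v = |∑ i, e i * dirDeriv s J (fun μ' => Ω μ' i) μ u| } }

/-- The quantity `κ_ℓ^Q(μ)` of Definition 2.2 of the paper:
`max_{1≤J≤Q} max_{‖u‖=1} |⟨d^J/dt^J β(μ+tu)|_{t=0}, ℓ⟩|`. -/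
noncomputable def kappaQ {s ν : ℕ} (Q : ℕ) (β : (Fin s → ℝ) → Fin ν → ℝ)
    (ℓ : Fin ν → ℤ) (μ : Fin s → ℝ) : ℝ :=
  sSup { v : ℝ | ∃ J : ℕ, 1 ≤ J ∧ J ≤ Q ∧ ∃ u : Fin s → ℝ, (∑ l, u l ^ 2) = 1 ∧
      v = |∑ j, (ℓ j : ℝ) * dirDeriv s J (fun μ' => β μ' j) μ u| }


namespace AffAux

variable {s : ℕ}

lemma lineDeriv_eq {𝔄 : Set (Fin s → ℝ)} (h𝔄 : IsOpen 𝔄)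
    (J : ℕ) (F : (Fin s → ℝ) → ℝ) (hF : ContDiffOn ℝ (J : ℕ∞) F 𝔄)
    {μ : Fin s → ℝ} (hμ : μ ∈ 𝔄) (u : Fin s → ℝ) :
    iteratedDeriv J (fun t : ℝ => F (μ + t • u)) 0
      = iteratedFDerivWithin ℝ J F 𝔄 μ (fun _ => u) := by
  induction J generalizing F with
  | zero => simp
  | succ J IH =>
    have hud : UniqueDiffOn ℝ 𝔄 := h𝔄.uniqueDiffOn
    set F₁ : (Fin s → ℝ) → ℝ := fun x => fderivWithin ℝ F 𝔄 x u with hF₁def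
    have hF' : ContDiffOn ℝ (J : ℕ∞) (fderivWithin ℝ F 𝔄) 𝔄 := by
      apply hF.fderivWithin hud
      exact_mod_cast le_rfl
    have hF₁ : ContDiffOn ℝ (J : ℕ∞) F₁ 𝔄 := hF'.clm_apply contDiffOn_const
    have hev : deriv (fun t : ℝ => F (μ + t • u)) =ᶠ[𝓝 (0:ℝ)] fun t : ℝ => F₁ (μ + t • u) := by
      have hTopen : IsOpen {t : ℝ | μ + t • u ∈ 𝔄} := h𝔄.preimage (by continuity)
      have h0 : (0:ℝ) ∈ {t : ℝ | μ + t • u ∈ 𝔄} := by simpa using hμ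
      filter_upwards [hTopen.mem_nhds h0] with t ht
      have hmem : μ + t • u ∈ 𝔄 := ht
      have hd : DifferentiableAt ℝ F (μ + t • u) :=
        (hF.differentiableOn
          (by simp)).differentiableAt
          (h𝔄.mem_nhds hmem)
      have h2 : HasDerivAt (fun t' : ℝ => μ + t' • u) u t := by
        simpa using ((hasDerivAt_id t).smul_const u).const_add μ
      have h1 : HasFDerivAt F (fderivWithin ℝ F 𝔄 (μ + t • u)) (μ + t • u) := by
        rw [fderivWithin_of_isOpen h𝔄 hmem]; exact hd.hasFDerivAt
      exact (h1.comp_hasDerivAt t h2).deriv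
    rw [iteratedDeriv_succ', hev.iteratedDeriv_eq, IH F₁ hF₁]
    have hcomp : iteratedFDerivWithin ℝ J F₁ 𝔄 μ =
        (ContinuousLinearMap.apply ℝ ℝ u).compContinuousMultilinearMap
          (iteratedFDerivWithin ℝ J (fderivWithin ℝ F 𝔄) 𝔄 μ) :=
      (ContinuousLinearMap.apply ℝ ℝ u).iteratedFDerivWithin_comp_left (hF' μ hμ) hud hμ le_rfl
    rw [iteratedFDerivWithin_succ_apply_right hud hμ, hcomp]
    rfl

/-- the unit sphere (squared-sum one) -/
def sph (m : ℕ) : Set (Fin m → ℝ) := {u | (∑ l, u l ^ 2) = 1}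

lemma sph_isCompact (m : ℕ) : IsCompact (sph m) := by
  apply (isCompact_closedBall (0 : Fin m → ℝ) 1).of_isClosed_subset
  · exact isClosed_eq (by continuity) continuous_const
  · intro u hu
    rw [mem_closedBall_zero_iff]
    refine (pi_norm_le_iff_of_nonneg zero_le_one).2 fun l => ?_
    rw [Real.norm_eq_abs, ← sq_le_one_iff_abs_le_one]
    calc u l ^ 2 ≤ ∑ j, u j ^ 2 :=
          Finset.single_le_sum (fun j _ => sq_nonneg (u j)) (Finset.mem_univ l)
      _ = 1 := hu

lemma sph_nonempty {m : ℕ} (hm : 0 < m) : (sph m).Nonempty := by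
  refine ⟨Pi.single ⟨0, hm⟩ 1, ?_⟩
  simp [sph, Pi.single_apply]

lemma sph_subset_closedBall (m : ℕ) : sph m ⊆ closedBall (0 : Fin m → ℝ) 1 := by
  intro u hu
  rw [mem_closedBall_zero_iff]
  refine (pi_norm_le_iff_of_nonneg zero_le_one).2 fun l => ?_
  rw [Real.norm_eq_abs, ← sq_le_one_iff_abs_le_one]
  calc u l ^ 2 ≤ ∑ j, u j ^ 2 :=
        Finset.single_le_sum (fun j _ => sq_nonneg (u j)) (Finset.mem_univ l)
    _ = 1 := hu

/-- contracted iterated derivative -/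
noncomputable def dd (𝔄 : Set (Fin s → ℝ)) {m : ℕ} (H : (Fin s → ℝ) → Fin m → ℝ)
    (J : ℕ) (c : Fin m → ℝ) (μ u : Fin s → ℝ) : ℝ :=
  ∑ i, c i * iteratedFDerivWithin ℝ J (fun x => H x i) 𝔄 μ (fun _ => u)

def SS (𝔄 : Set (Fin s → ℝ)) (Q : ℕ) {m : ℕ} (H : (Fin s → ℝ) → Fin m → ℝ)
    (c : Fin m → ℝ) (μ : Fin s → ℝ) : Set ℝ :=
  {v | ∃ J : ℕ, 1 ≤ J ∧ J ≤ Q ∧ ∃ u : Fin s → ℝ, (∑ l, u l ^ 2) = 1 ∧ v = |dd 𝔄 H J c μ u|}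

variable {𝔄 : Set (Fin s → ℝ)} {Q m : ℕ} {H : (Fin s → ℝ) → Fin m → ℝ}

lemma dd_contOn (h𝔄 : IsOpen 𝔄) (hH : ContDiffOn ℝ (Q : ℕ∞) H 𝔄) {J : ℕ} (hJ : J ≤ Q) :
    ContinuousOn
      (fun p : (Fin s → ℝ) × (Fin m → ℝ) × (Fin s → ℝ) => dd 𝔄 H J p.2.1 p.1 p.2.2)
      (𝔄 ×ˢ (univ ×ˢ univ)) := by
  apply continuousOn_finset_sum
  intro i _
  apply ContinuousOn.mul
  · exact ((continuous_apply i).comp (continuous_fst.comp continuous_snd)).continuousOn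
  · apply ContinuousOn.eval
    · exact (((contDiffOn_pi.1 hH i).continuousOn_iteratedFDerivWithin
        (by exact_mod_cast hJ) h𝔄.uniqueDiffOn).comp continuousOn_fst (fun p hp => hp.1))
    · exact (continuous_pi fun _ => continuous_snd.comp continuous_snd).continuousOn

lemma SS_eq_biUnion (c : Fin m → ℝ) (μ : Fin s → ℝ) :
    SS 𝔄 Q H c μ = ⋃ J ∈ Finset.Icc 1 Q, (fun u => |dd 𝔄 H J c μ u|) '' sph s := by
  ext v
  simp only [SS, mem_setOf_eq, mem_iUnion, Finset.mem_Icc, mem_image, sph, mem_setOf_eq]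
  constructor
  · rintro ⟨J, h1, h2, u, hu, rfl⟩; exact ⟨J, ⟨h1, h2⟩, u, hu, rfl⟩
  · rintro ⟨J, ⟨h1, h2⟩, u, hu, rfl⟩; exact ⟨J, h1, h2, u, hu, rfl⟩

lemma SS_isCompact (h𝔄 : IsOpen 𝔄) (hH : ContDiffOn ℝ (Q : ℕ∞) H 𝔄)
    (c : Fin m → ℝ) {μ : Fin s → ℝ} (hμ : μ ∈ 𝔄) : IsCompact (SS 𝔄 Q H c μ) := by
  rw [SS_eq_biUnion]
  apply (Finset.Icc 1 Q).finite_toSet.isCompact_biUnion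
  intro J hJ
  apply (sph_isCompact s).image_of_continuousOn
  have hc : Continuous (fun u : Fin s → ℝ => ((μ, c, u) : (Fin s → ℝ) × (Fin m → ℝ) × (Fin s → ℝ))) := by continuity
  have h2 : ContinuousOn (fun u : Fin s → ℝ => dd 𝔄 H J c μ u) (sph s) :=
    ContinuousOn.comp (g := fun p : (Fin s → ℝ) × (Fin m → ℝ) × (Fin s → ℝ) => dd 𝔄 H J p.2.1 p.1 p.2.2)
      (dd_contOn h𝔄 hH (Finset.mem_Icc.1 (Finset.mem_coe.1 hJ)).2) hc.continuousOn
      (fun u _ => ⟨hμ, trivial, trivial⟩)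
  exact h2.abs

lemma SS_nonempty (hQ : 0 < Q) (hs : 0 < s) (c : Fin m → ℝ) (μ : Fin s → ℝ) :
    (SS 𝔄 Q H c μ).Nonempty := by
  obtain ⟨u, hu⟩ := sph_nonempty hs
  exact ⟨_, 1, le_rfl, hQ, u, hu, rfl⟩

lemma SS_bddAbove (h𝔄 : IsOpen 𝔄) (hH : ContDiffOn ℝ (Q : ℕ∞) H 𝔄)
    (c : Fin m → ℝ) {μ : Fin s → ℝ} (hμ : μ ∈ 𝔄) : BddAbove (SS 𝔄 Q H c μ) :=
  (SS_isCompact h𝔄 hH c hμ).bddAbove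

lemma sSup_SS_nonneg (h𝔄 : IsOpen 𝔄) (hH : ContDiffOn ℝ (Q : ℕ∞) H 𝔄) (hQ : 0 < Q) (hs : 0 < s)
    (c : Fin m → ℝ) {μ : Fin s → ℝ} (hμ : μ ∈ 𝔄) : 0 ≤ sSup (SS 𝔄 Q H c μ) := by
  obtain ⟨u, hu⟩ := sph_nonempty hs
  have hmem : |dd 𝔄 H 1 c μ u| ∈ SS 𝔄 Q H c μ := ⟨1, le_rfl, hQ, u, hu, rfl⟩
  exact le_trans (abs_nonneg _) (le_csSup (SS_bddAbove h𝔄 hH c hμ) hmem)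


lemma unif_est_one {X Y : Type*} [PseudoMetricSpace X] [PseudoMetricSpace Y]
    {C : Set X} {K : Set Y} (hC : IsCompact C) (hK : IsCompact K)
    {G : X × Y → ℝ} (hG : ContinuousOn G (C ×ˢ K))
    {x₀ : X} (hx₀ : x₀ ∈ C) {ε : ℝ} (hε : 0 < ε) :
    ∃ δ > 0, ∀ x ∈ C, dist x x₀ < δ → ∀ y ∈ K, |G (x, y) - G (x₀, y)| ≤ ε := by
  have huc := (hC.prod hK).uniformContinuousOn_of_continuous hG
  rw [Metric.uniformContinuousOn_iff] at huc
  obtain ⟨δ, hδ, hprop⟩ := huc ε hε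
  refine ⟨δ, hδ, fun x hx hdist y hy => ?_⟩
  have := hprop (x, y) ⟨hx, hy⟩ (x₀, y) ⟨hx₀, hy⟩ (by
    rw [Prod.dist_eq]
    simpa [dist_self, hδ] using hdist)
  rw [Real.dist_eq] at this
  exact this.le

lemma unif_est_family {ι X Y : Type*} [PseudoMetricSpace X] [PseudoMetricSpace Y]
    (A : Finset ι) {C : Set X} {K : Set Y} (hC : IsCompact C) (hK : IsCompact K)
    {G : ι → X × Y → ℝ} (hG : ∀ i ∈ A, ContinuousOn (G i) (C ×ˢ K))
    {x₀ : X} (hx₀ : x₀ ∈ C) {ε : ℝ} (hε : 0 < ε) :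
    ∃ δ > 0, ∀ x ∈ C, dist x x₀ < δ → ∀ i ∈ A, ∀ y ∈ K, |G i (x, y) - G i (x₀, y)| ≤ ε := by
  classical
  induction A using Finset.induction with
  | empty => exact ⟨1, one_pos, fun x _ _ i hi => absurd hi (Finset.notMem_empty i)⟩
  | insert a A' hnot ih =>
    obtain ⟨δ₁, hδ₁, h₁⟩ := unif_est_one hC hK (hG a (Finset.mem_insert_self a A')) hx₀ hε
    obtain ⟨δ₂, hδ₂, h₂⟩ := ih (fun i hi => hG i (Finset.mem_insert_of_mem hi))
    refine ⟨min δ₁ δ₂, lt_min hδ₁ hδ₂, fun x hx hd i hi y hy => ?_⟩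
    rcases Finset.mem_insert.1 hi with rfl | hi
    · exact h₁ x hx (lt_of_lt_of_le hd (min_le_left _ _)) y hy
    · exact h₂ x hx (lt_of_lt_of_le hd (min_le_right _ _)) i hi y hy


variable {s : ℕ} {𝔄 : Set (Fin s → ℝ)} {Q m : ℕ} {H : (Fin s → ℝ) → Fin m → ℝ}

lemma sSup_SS_close (h𝔄 : IsOpen 𝔄) (hH : ContDiffOn ℝ (Q : ℕ∞) H 𝔄) (hQ : 0 < Q) (hs : 0 < s)
    {μ : Fin s → ℝ} (hμ : μ ∈ 𝔄) (R : ℝ) {ε : ℝ} (hε : 0 < ε) :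
    ∀ᶠ μ' in 𝓝 μ, μ' ∈ 𝔄 ∧ ∀ c ∈ closedBall (0 : Fin m → ℝ) R,
      |sSup (SS 𝔄 Q H c μ') - sSup (SS 𝔄 Q H c μ)| ≤ ε := by
  obtain ⟨r, hr, hball⟩ : ∃ r > 0, closedBall μ r ⊆ 𝔄 :=
    nhds_basis_closedBall.mem_iff.1 (h𝔄.mem_nhds hμ)
  have hC : IsCompact (closedBall μ r) := isCompact_closedBall μ r
  have hK : IsCompact ((closedBall (0 : Fin m → ℝ) R) ×ˢ sph s) :=
    (isCompact_closedBall _ R).prod (sph_isCompact s)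
  have hGcont : ∀ J ∈ Finset.Icc 1 Q,
      ContinuousOn (fun q : (Fin s → ℝ) × (Fin m → ℝ) × (Fin s → ℝ) => dd 𝔄 H J q.2.1 q.1 q.2.2)
        ((closedBall μ r) ×ˢ ((closedBall (0 : Fin m → ℝ) R) ×ˢ sph s)) := by
    intro J hJ
    exact (dd_contOn h𝔄 hH (Finset.mem_Icc.1 hJ).2).mono
      (fun p hp => ⟨hball hp.1, trivial, trivial⟩)
  obtain ⟨δ, hδ, hp⟩ := unif_est_family (Finset.Icc 1 Q) hC hK hGcont
    (mem_closedBall_self hr.le) hε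
  have hball_mem : Metric.ball μ (min δ r) ∈ 𝓝 μ := ball_mem_nhds μ (lt_min hδ hr)
  filter_upwards [hball_mem] with μ' hμ'
  rw [mem_ball] at hμ'
  have hμ'C : μ' ∈ closedBall μ r := mem_closedBall.2 (le_of_lt (lt_of_lt_of_le hμ' (min_le_right _ _)))
  have hμ'𝔄 : μ' ∈ 𝔄 := hball hμ'C
  refine ⟨hμ'𝔄, fun c hc => ?_⟩
  have hdd : ∀ J, 1 ≤ J → J ≤ Q → ∀ u : Fin s → ℝ, (∑ l, u l ^ 2) = 1 →
      |dd 𝔄 H J c μ' u - dd 𝔄 H J c μ u| ≤ ε := by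
    intro J h1 h2 u hu
    exact hp μ' hμ'C (lt_of_lt_of_le hμ' (min_le_left _ _)) J
      (Finset.mem_Icc.2 ⟨h1, h2⟩) (c, u) ⟨hc, hu⟩
  have h1 : sSup (SS 𝔄 Q H c μ') ≤ sSup (SS 𝔄 Q H c μ) + ε := by
    apply csSup_le (SS_nonempty hQ hs c μ')
    rintro v ⟨J, hJ1, hJ2, u, hu, rfl⟩
    calc |dd 𝔄 H J c μ' u| ≤ |dd 𝔄 H J c μ u| + ε := by
          have h := hdd J hJ1 hJ2 u hu
          have := abs_sub_abs_le_abs_sub (dd 𝔄 H J c μ' u) (dd 𝔄 H J c μ u)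
          linarith
      _ ≤ sSup (SS 𝔄 Q H c μ) + ε := by
          have := le_csSup (SS_bddAbove h𝔄 hH c hμ) (⟨J, hJ1, hJ2, u, hu, rfl⟩ :
            |dd 𝔄 H J c μ u| ∈ SS 𝔄 Q H c μ)
          linarith
  have h2 : sSup (SS 𝔄 Q H c μ) ≤ sSup (SS 𝔄 Q H c μ') + ε := by
    apply csSup_le (SS_nonempty hQ hs c μ)
    rintro v ⟨J, hJ1, hJ2, u, hu, rfl⟩
    calc |dd 𝔄 H J c μ u| ≤ |dd 𝔄 H J c μ' u| + ε := by
          have h := hdd J hJ1 hJ2 u hu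
          have := abs_sub_abs_le_abs_sub (dd 𝔄 H J c μ u) (dd 𝔄 H J c μ' u)
          rw [abs_sub_comm] at h
          linarith
      _ ≤ sSup (SS 𝔄 Q H c μ') + ε := by
          have := le_csSup (SS_bddAbove h𝔄 hH c hμ'𝔄) (⟨J, hJ1, hJ2, u, hu, rfl⟩ :
            |dd 𝔄 H J c μ' u| ∈ SS 𝔄 Q H c μ')
          linarith
  rw [abs_sub_le_iff]
  constructor <;> linarith

end AffAux

namespace AffAux
variable {s : ℕ} {𝔄 : Set (Fin s → ℝ)} {Q m : ℕ} {H : (Fin s → ℝ) → Fin m → ℝ}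

lemma dirDeriv_eq_itFDW (h𝔄 : IsOpen 𝔄) (hH : ContDiffOn ℝ (Q : ℕ∞) H 𝔄)
    {μ : Fin s → ℝ} (hμ : μ ∈ 𝔄) {J : ℕ} (hJ : J ≤ Q) (i : Fin m) (u : Fin s → ℝ) :
    dirDeriv s J (fun μ' => H μ' i) μ u
      = iteratedFDerivWithin ℝ J (fun x => H x i) 𝔄 μ (fun _ => u) :=
  lineDeriv_eq h𝔄 J _ ((contDiffOn_pi.1 hH i).of_le (by exact_mod_cast hJ)) hμ u

lemma kappaQ_eq (h𝔄 : IsOpen 𝔄) (hH : ContDiffOn ℝ (Q : ℕ∞) H 𝔄)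
    {μ : Fin s → ℝ} (hμ : μ ∈ 𝔄) (ℓ : Fin m → ℤ) :
    kappaQ Q H ℓ μ = sSup (SS 𝔄 Q H (fun j => (ℓ j : ℝ)) μ) := by
  unfold kappaQ
  congr 1
  ext v
  simp only [SS, mem_setOf_eq]
  refine exists_congr fun J => and_congr_right fun h1 => and_congr_right fun h2 =>
    exists_congr fun u => and_congr_right fun hu => ?_
  have : (∑ j, (ℓ j : ℝ) * dirDeriv s J (fun μ' => H μ' j) μ u) = dd 𝔄 H J (fun j => (ℓ j : ℝ)) μ u :=
    Finset.sum_congr rfl fun j _ => by rw [dirDeriv_eq_itFDW h𝔄 hH hμ h2]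
  rw [this]

/-- the outer set of `rhoQ` -/
def TT (𝔄 : Set (Fin s → ℝ)) (Q : ℕ) {n : ℕ} (Ω : (Fin s → ℝ) → Fin n → ℝ)
    (μ : Fin s → ℝ) : Set ℝ :=
  {r | ∃ e : Fin n → ℝ, (∑ i, e i ^ 2) = 1 ∧ r = sSup (SS 𝔄 Q Ω e μ)}

lemma rhoQ_eq (h𝔄 : IsOpen 𝔄) (hH : ContDiffOn ℝ (Q : ℕ∞) H 𝔄)
    {μ : Fin s → ℝ} (hμ : μ ∈ 𝔄) :
    rhoQ Q H μ = sInf (TT 𝔄 Q H μ) := by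
  unfold rhoQ TT
  congr 1
  ext r
  refine exists_congr fun e => and_congr_right fun he => ?_
  have : {v : ℝ | ∃ J : ℕ, 1 ≤ J ∧ J ≤ Q ∧ ∃ u : Fin s → ℝ, (∑ l, u l ^ 2) = 1 ∧
      v = |∑ i, e i * dirDeriv s J (fun μ' => H μ' i) μ u|} = SS 𝔄 Q H e μ := by
    ext v
    simp only [SS, mem_setOf_eq]
    refine exists_congr fun J => and_congr_right fun h1 => and_congr_right fun h2 =>
      exists_congr fun u => and_congr_right fun hu => ?_
    have : (∑ i, e i * dirDeriv s J (fun μ' => H μ' i) μ u) = dd 𝔄 H J e μ u :=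
      Finset.sum_congr rfl fun i _ => by rw [dirDeriv_eq_itFDW h𝔄 hH hμ h2]
    rw [this]
  rw [this]

lemma TT_nonempty (hn : 0 < m) (μ : Fin s → ℝ) : (TT 𝔄 Q H μ).Nonempty := by
  obtain ⟨e, he⟩ := sph_nonempty hn
  exact ⟨_, e, he, rfl⟩

lemma TT_bddBelow (h𝔄 : IsOpen 𝔄) (hH : ContDiffOn ℝ (Q : ℕ∞) H 𝔄) (hQ : 0 < Q) (hs : 0 < s)
    {μ : Fin s → ℝ} (hμ : μ ∈ 𝔄) : BddBelow (TT 𝔄 Q H μ) := by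
  refine ⟨0, ?_⟩
  rintro r ⟨e, he, rfl⟩
  exact sSup_SS_nonneg h𝔄 hH hQ hs e hμ

lemma rhoQ_le_sSup (h𝔄 : IsOpen 𝔄) (hH : ContDiffOn ℝ (Q : ℕ∞) H 𝔄) (hQ : 0 < Q) (hs : 0 < s)
    {μ : Fin s → ℝ} (hμ : μ ∈ 𝔄) {e : Fin m → ℝ} (he : (∑ i, e i ^ 2) = 1) :
    rhoQ Q H μ ≤ sSup (SS 𝔄 Q H e μ) := by
  rw [rhoQ_eq h𝔄 hH hμ]
  exact csInf_le (TT_bddBelow h𝔄 hH hQ hs hμ) ⟨e, he, rfl⟩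

lemma rho_lower (h𝔄 : IsOpen 𝔄) (hH : ContDiffOn ℝ (Q : ℕ∞) H 𝔄) (hQ : 0 < Q) (hs : 0 < s)
    (hn : 0 < m) {μ : Fin s → ℝ} (hμ : μ ∈ 𝔄) {ε : ℝ} (hε : 0 < ε) :
    ∀ᶠ μ' in 𝓝 μ, μ' ∈ 𝔄 ∧ rhoQ Q H μ - ε ≤ rhoQ Q H μ' := by
  filter_upwards [sSup_SS_close h𝔄 hH hQ hs hμ 1 hε] with μ' hh
  obtain ⟨hμ', hclose⟩ := hh
  refine ⟨hμ', ?_⟩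
  rw [rhoQ_eq h𝔄 hH hμ']
  apply le_csInf (TT_nonempty hn μ')
  rintro r ⟨e, he, rfl⟩
  have h1 := hclose e (sph_subset_closedBall m he)
  have h2 := rhoQ_le_sSup h𝔄 hH hQ hs hμ he
  rw [abs_sub_le_iff] at h1
  linarith [h1.2]

lemma kappa_nonneg (h𝔄 : IsOpen 𝔄) (hH : ContDiffOn ℝ (Q : ℕ∞) H 𝔄) (hQ : 0 < Q) (hs : 0 < s)
    {μ : Fin s → ℝ} (hμ : μ ∈ 𝔄) (ℓ : Fin m → ℤ) : 0 ≤ kappaQ Q H ℓ μ := by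
  rw [kappaQ_eq h𝔄 hH hμ]
  exact sSup_SS_nonneg h𝔄 hH hQ hs _ hμ

lemma intvec_mem_closedBall {L : ℕ} {ℓ : Fin m → ℤ} (hb : (∑ j, |ℓ j|) ≤ (L : ℤ)) :
    (fun j => (ℓ j : ℝ)) ∈ closedBall (0 : Fin m → ℝ) (L : ℝ) := by
  rw [mem_closedBall_zero_iff]
  refine (pi_norm_le_iff_of_nonneg (by positivity)).2 fun j => ?_
  rw [Real.norm_eq_abs, ← Int.cast_abs]
  exact_mod_cast le_trans
    (Finset.single_le_sum (fun i _ => abs_nonneg (ℓ i)) (Finset.mem_univ j)) hb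

lemma kappa_close (h𝔄 : IsOpen 𝔄) (hH : ContDiffOn ℝ (Q : ℕ∞) H 𝔄) (hQ : 0 < Q) (hs : 0 < s)
    {μ : Fin s → ℝ} (hμ : μ ∈ 𝔄) (L : ℕ) {ε : ℝ} (hε : 0 < ε) :
    ∀ᶠ μ' in 𝓝 μ, μ' ∈ 𝔄 ∧ ∀ ℓ : Fin m → ℤ, (∑ j, |ℓ j|) ≤ (L : ℤ) →
      |kappaQ Q H ℓ μ' - kappaQ Q H ℓ μ| ≤ ε := by
  filter_upwards [sSup_SS_close h𝔄 hH hQ hs hμ (L : ℝ) hε] with μ' hh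
  obtain ⟨hμ', hclose⟩ := hh
  refine ⟨hμ', fun ℓ hb => ?_⟩
  rw [kappaQ_eq h𝔄 hH hμ', kappaQ_eq h𝔄 hH hμ]
  exact hclose _ (intvec_mem_closedBall hb)


lemma itFDW_weighted (h𝔄 : IsOpen 𝔄) (hH : ContDiffOn ℝ (Q : ℕ∞) H 𝔄)
    {μ : Fin s → ℝ} (hμ : μ ∈ 𝔄) {J : ℕ} (hJ : J ≤ Q) (a : Fin m → ℝ) (u : Fin s → ℝ) :
    iteratedFDerivWithin ℝ J (fun x => ∑ i, a i * H x i) 𝔄 μ (fun _ => u) = dd 𝔄 H J a μ u := by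
  have hud : UniqueDiffOn ℝ 𝔄 := h𝔄.uniqueDiffOn
  have hcomp : ∀ i : Fin m, ContDiffOn ℝ (J : ℕ∞) (fun x => a i * H x i) 𝔄 := fun i =>
    contDiffOn_const.mul ((contDiffOn_pi.1 hH i).of_le (by exact_mod_cast hJ))
  have h1 : iteratedFDerivWithin ℝ J (∑ i : Fin m, (fun i (x : Fin s → ℝ) => a i * H x i) i ·) 𝔄 μ
      = ∑ i : Fin m, iteratedFDerivWithin ℝ J (fun x => a i * H x i) 𝔄 μ :=
    by have h := iteratedFDerivWithin_sum_apply (u := Finset.univ) hud hμ (fun i _ => hcomp i μ hμ); rwa [Finset.sum_fn] at h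
  have h2 : (fun x : Fin s → ℝ => ∑ i, a i * H x i)
      = (∑ i : Fin m, (fun i (x : Fin s → ℝ) => a i * H x i) i ·) := by
    funext x; rfl
  rw [h2, h1]
  rw [ContinuousMultilinearMap.sum_apply]
  refine Finset.sum_congr rfl fun i _ => ?_
  have h3 : (fun x : Fin s → ℝ => a i * H x i) = a i • (fun x => H x i) := by
    funext x; simp [smul_eq_mul]
  rw [h3, iteratedFDerivWithin_const_smul_apply
    ((contDiffOn_pi.1 hH i).of_le (by exact_mod_cast hJ) μ hμ) hud hμ]
  simp [smul_eq_mul]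

variable {n ν : ℕ} {Ω : (Fin s → ℝ) → Fin n → ℝ} {β : (Fin s → ℝ) → Fin ν → ℝ}

lemma combo_contDiffOn (hΩ : ContDiffOn ℝ (Q : ℕ∞) Ω 𝔄) (hβ : ContDiffOn ℝ (Q : ℕ∞) β 𝔄)
    (a : Fin n → ℝ) (b : Fin ν → ℝ) :
    ContDiffOn ℝ (Q : ℕ∞) (fun μ' => (∑ i, a i * Ω μ' i) + ∑ j, b j * β μ' j) 𝔄 :=
  (ContDiffOn.sum fun i _ => contDiffOn_const.mul (contDiffOn_pi.1 hΩ i)).add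
    (ContDiffOn.sum fun j _ => contDiffOn_const.mul (contDiffOn_pi.1 hβ j))

lemma dirDeriv_combo (h𝔄 : IsOpen 𝔄) (hΩ : ContDiffOn ℝ (Q : ℕ∞) Ω 𝔄)
    (hβ : ContDiffOn ℝ (Q : ℕ∞) β 𝔄) {μ : Fin s → ℝ} (hμ : μ ∈ 𝔄) {J : ℕ} (hJ : J ≤ Q)
    (a : Fin n → ℝ) (b : Fin ν → ℝ) (u : Fin s → ℝ) :
    dirDeriv s J (fun μ' => (∑ i, a i * Ω μ' i) + ∑ j, b j * β μ' j) μ u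
      = dd 𝔄 Ω J a μ u + dd 𝔄 β J b μ u := by
  have hud : UniqueDiffOn ℝ 𝔄 := h𝔄.uniqueDiffOn
  have hf : ContDiffOn ℝ (J : ℕ∞) (fun x : Fin s → ℝ => ∑ i, a i * Ω x i) 𝔄 :=
    ContDiffOn.sum fun i _ => contDiffOn_const.mul ((contDiffOn_pi.1 hΩ i).of_le
      (by exact_mod_cast hJ))
  have hg : ContDiffOn ℝ (J : ℕ∞) (fun x : Fin s → ℝ => ∑ j, b j * β x j) 𝔄 :=
    ContDiffOn.sum fun j _ => contDiffOn_const.mul ((contDiffOn_pi.1 hβ j).of_le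
      (by exact_mod_cast hJ))
  have h0 : dirDeriv s J (fun μ' => (∑ i, a i * Ω μ' i) + ∑ j, b j * β μ' j) μ u
      = iteratedFDerivWithin ℝ J (fun μ' => (∑ i, a i * Ω μ' i) + ∑ j, b j * β μ' j) 𝔄 μ
        (fun _ => u) :=
    lineDeriv_eq h𝔄 J _ ((combo_contDiffOn hΩ hβ a b).of_le (by exact_mod_cast hJ)) hμ u
  rw [h0, iteratedFDerivWithin_add_apply' (hf μ hμ) (hg μ hμ) hud hμ]
  rw [ContinuousMultilinearMap.add_apply,
    itFDW_weighted h𝔄 hΩ hμ hJ a u, itFDW_weighted h𝔄 hβ hμ hJ b u]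

lemma nonvanish_eventually (h𝔄 : IsOpen 𝔄) (hΩ : ContDiffOn ℝ (Q : ℕ∞) Ω 𝔄)
    (hβ : ContDiffOn ℝ (Q : ℕ∞) β 𝔄) {μ : Fin s → ℝ} (hμ : μ ∈ 𝔄)
    (a : Fin n → ℝ) (b : Fin ν → ℝ)
    (hex : ∃ J : ℕ, 1 ≤ J ∧ J ≤ Q ∧ ∃ u : Fin s → ℝ,
      dirDeriv s J (fun μ' => (∑ i, a i * Ω μ' i) + ∑ j, b j * β μ' j) μ u ≠ 0) :
    ∀ᶠ μ' in 𝓝 μ, μ' ∈ 𝔄 → ∃ J : ℕ, 1 ≤ J ∧ J ≤ Q ∧ ∃ u : Fin s → ℝ,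
      dirDeriv s J (fun μ' => (∑ i, a i * Ω μ' i) + ∑ j, b j * β μ' j) μ' u ≠ 0 := by
  obtain ⟨J, hJ1, hJ2, u, hne⟩ := hex
  have hval : ∀ x ∈ 𝔄,
      dirDeriv s J (fun μ' => (∑ i, a i * Ω μ' i) + ∑ j, b j * β μ' j) x u
        = dd 𝔄 Ω J a x u + dd 𝔄 β J b x u := fun x hx =>
    dirDeriv_combo h𝔄 hΩ hβ hx hJ2 a b u
  have hcont : ContinuousOn (fun x => dd 𝔄 Ω J a x u + dd 𝔄 β J b x u) 𝔄 := by
    have hΩc := dd_contOn h𝔄 hΩ hJ2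
    have hβc := dd_contOn h𝔄 hβ hJ2
    have hmapΩ : Continuous (fun x : Fin s → ℝ =>
        ((x, a, u) : (Fin s → ℝ) × (Fin n → ℝ) × (Fin s → ℝ))) := by continuity
    have hmapβ : Continuous (fun x : Fin s → ℝ =>
        ((x, b, u) : (Fin s → ℝ) × (Fin ν → ℝ) × (Fin s → ℝ))) := by continuity
    exact (ContinuousOn.comp (g := fun p : (Fin s → ℝ) × (Fin n → ℝ) × (Fin s → ℝ) =>
        dd 𝔄 Ω J p.2.1 p.1 p.2.2) hΩc hmapΩ.continuousOn
        (fun x hx => ⟨hx, trivial, trivial⟩)).add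
      (ContinuousOn.comp (g := fun p : (Fin s → ℝ) × (Fin ν → ℝ) × (Fin s → ℝ) =>
        dd 𝔄 β J p.2.1 p.1 p.2.2) hβc hmapβ.continuousOn
        (fun x hx => ⟨hx, trivial, trivial⟩))
  have hca : ContinuousAt (fun x => dd 𝔄 Ω J a x u + dd 𝔄 β J b x u) μ :=
    hcont.continuousAt (h𝔄.mem_nhds hμ)
  have hne' : dd 𝔄 Ω J a μ u + dd 𝔄 β J b μ u ≠ 0 := by
    rw [← hval μ hμ]; exact hne
  filter_upwards [hca.eventually_ne hne'] with μ' hμne hμ'𝔄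
  exact ⟨J, hJ1, hJ2, u, by rw [hval μ' hμ'𝔄]; exact hμne⟩

lemma auto_nondeg (h𝔄 : IsOpen 𝔄) (hΩ : ContDiffOn ℝ (Q : ℕ∞) Ω 𝔄)
    (hβ : ContDiffOn ℝ (Q : ℕ∞) β 𝔄) (hQ : 0 < Q) (hs : 0 < s)
    {μ : Fin s → ℝ} (hμ : μ ∈ 𝔄) (hρ : 0 < rhoQ Q Ω μ) (k : Fin n → ℤ) (ℓ : Fin ν → ℤ)
    (hlt : kappaQ Q β ℓ μ < Real.sqrt (∑ i, ((k i : ℝ)) ^ 2) * rhoQ Q Ω μ) :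
    ∃ J : ℕ, 1 ≤ J ∧ J ≤ Q ∧ ∃ u : Fin s → ℝ,
      dirDeriv s J (fun μ' => (∑ i, (k i : ℝ) * Ω μ' i) + ∑ j, (ℓ j : ℝ) * β μ' j) μ u ≠ 0 := by
  set T := ∑ i, ((k i : ℝ)) ^ 2 with hTdef
  have hκ0 : 0 ≤ kappaQ Q β ℓ μ := kappa_nonneg h𝔄 hβ hQ hs hμ ℓ
  have hsq : 0 < Real.sqrt T := by nlinarith [Real.sqrt_nonneg T]
  have hT : 0 < T := Real.sqrt_pos.1 hsq
  set e : Fin n → ℝ := fun i => (Real.sqrt T)⁻¹ * (k i : ℝ) with hedef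
  have he : (∑ i, e i ^ 2) = 1 := by
    have hsum : (∑ i, e i ^ 2) = (Real.sqrt T)⁻¹ ^ 2 * T := by
      rw [hTdef, Finset.mul_sum]
      exact Finset.sum_congr rfl fun i _ => by rw [hedef]; ring
    rw [hsum, ← Real.sq_sqrt hT.le]
    field_simp
    rw [Real.sqrt_sq hsq.le]
  have hρle := rhoQ_le_sSup h𝔄 hΩ hQ hs hμ he
  have hlt2 : kappaQ Q β ℓ μ / Real.sqrt T < sSup (SS 𝔄 Q Ω e μ) := by
    rw [div_lt_iff₀ hsq]
    nlinarith
  obtain ⟨v, hvmem, hvlt⟩ := exists_lt_of_lt_csSup (SS_nonempty hQ hs e μ) hlt2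
  obtain ⟨J, hJ1, hJ2, u, hu, rfl⟩ := hvmem
  have hkd : dd 𝔄 Ω J (fun i => ((k i : ℝ))) μ u = Real.sqrt T * dd 𝔄 Ω J e μ u := by
    unfold dd
    rw [Finset.mul_sum]
    refine Finset.sum_congr rfl fun i _ => ?_
    rw [hedef]
    field_simp
  have hβb : |dd 𝔄 β J (fun j => ((ℓ j : ℝ))) μ u| ≤ kappaQ Q β ℓ μ := by
    rw [kappaQ_eq h𝔄 hβ hμ]
    exact le_csSup (SS_bddAbove h𝔄 hβ _ hμ) ⟨J, hJ1, hJ2, u, hu, rfl⟩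
  have habs : kappaQ Q β ℓ μ < |dd 𝔄 Ω J (fun i => ((k i : ℝ))) μ u| := by
    rw [hkd, abs_mul, abs_of_pos hsq]
    rw [div_lt_iff₀ hsq] at hvlt
    linarith
  refine ⟨J, hJ1, hJ2, u, ?_⟩
  rw [dirDeriv_combo h𝔄 hΩ hβ hμ hJ2]
  intro h0
  have hEq : dd 𝔄 β J (fun j => ((ℓ j : ℝ))) μ u = -dd 𝔄 Ω J (fun i => ((k i : ℝ))) μ u := by
    linarith
  rw [hEq, abs_neg] at hβb
  linarith

lemma finite_sqrt_le (R : ℝ) : {k : Fin n → ℤ | Real.sqrt (∑ i, ((k i : ℝ)) ^ 2) ≤ R}.Finite := by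
  apply Set.Finite.subset (Set.Finite.pi (fun _ : Fin n => Set.finite_Icc (-⌈R⌉) ⌈R⌉))
  intro k hk
  rw [Set.mem_pi]
  intro i _
  rw [Set.mem_Icc, ← abs_le]
  have h1 : |(k i : ℝ)| ≤ R := by
    rw [← Real.sqrt_sq_eq_abs]
    exact le_trans (Real.sqrt_le_sqrt
      (Finset.single_le_sum (fun j _ => sq_nonneg ((k j : ℝ))) (Finset.mem_univ i))) hk
  have : ((|k i| : ℤ) : ℝ) ≤ ((⌈R⌉ : ℤ) : ℝ) := by
    rw [Int.cast_abs]
    exact le_trans h1 (Int.le_ceil R)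
  exact_mod_cast this

lemma finite_sum_abs_le (L : ℕ) : {ℓ : Fin ν → ℤ | (∑ j, |ℓ j|) ≤ (L : ℤ)}.Finite := by
  apply Set.Finite.subset (Set.Finite.pi (fun _ : Fin ν => Set.finite_Icc (-(L : ℤ)) (L : ℤ)))
  intro ℓ hℓ
  rw [Set.mem_pi]
  intro j _
  rw [Set.mem_Icc, ← abs_le]
  exact le_trans (Finset.single_le_sum (fun i _ => abs_nonneg (ℓ i)) (Finset.mem_univ j)) hℓ
end AffAux

/-- The pair of mappings `(Ω, β)` is affinely `(Q,L)`-nondegenerate at the point `μ`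
(Definition 2.2 of the paper).  The condition
`max_{1≤|q|≤Q} |⟨D^qΩ(μ),k⟩+⟨D^qβ(μ),ℓ⟩| > 0` is expressed (equivalently, for `C^Q` maps) by
the existence of a nonvanishing directional derivative of some order `1 ≤ J ≤ Q` of the scalar
function `μ' ↦ ⟨Ω(μ'),k⟩+⟨β(μ'),ℓ⟩`. -/
def AffNondegAt {s n ν : ℕ} (Q L : ℕ) (Ω : (Fin s → ℝ) → Fin n → ℝ)
    (β : (Fin s → ℝ) → Fin ν → ℝ) (μ : Fin s → ℝ) : Prop :=
  (0 < n ∧ 0 < ν ∧ 0 < rhoQ Q Ω μ ∧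
    ∀ k : Fin n → ℤ, ∀ ℓ : Fin ν → ℤ,
      1 ≤ (∑ j, |ℓ j|) → (∑ j, |ℓ j|) ≤ (L : ℤ) →
      Real.sqrt (∑ i, ((k i : ℝ)) ^ 2) ≤ kappaQ Q β ℓ μ / rhoQ Q Ω μ →
      ∃ J : ℕ, 1 ≤ J ∧ J ≤ Q ∧ ∃ u : Fin s → ℝ,
        dirDeriv s J
          (fun μ' => (∑ i, (k i : ℝ) * Ω μ' i) + ∑ j, (ℓ j : ℝ) * β μ' j) μ u ≠ 0)
  ∨ (0 < n ∧ ν = 0 ∧ 0 < rhoQ Q Ω μ)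
  ∨ (n = 0 ∧ 0 < ν ∧ ∀ ℓ : Fin ν → ℤ,
      1 ≤ (∑ j, |ℓ j|) → (∑ j, |ℓ j|) ≤ (L : ℤ) → 0 < kappaQ Q β ℓ μ)
  ∨ (n = 0 ∧ ν = 0)


/-- affine `(Q,L)`-nondegeneracy of a pair of `C^Q` mappings is an open condition:
if it holds at `μ ∈ 𝔄`, it holds at every `μ' ∈ 𝔄` sufficiently close to `μ`; equivalently,
the set of points of `𝔄` where it holds is open. -/
theorem affNondeg_is_open
    (s n ν Q L : ℕ) (hs : 0 < s) (hQ : 0 < Q) (hL : 0 < L)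
    (𝔄 : Set (Fin s → ℝ)) (h𝔄 : IsOpen 𝔄)
    (Ω : (Fin s → ℝ) → Fin n → ℝ) (β : (Fin s → ℝ) → Fin ν → ℝ)
    (hΩ : ContDiffOn ℝ (Q : ℕ∞) Ω 𝔄) (hβ : ContDiffOn ℝ (Q : ℕ∞) β 𝔄) :
    (∀ μ ∈ 𝔄, AffNondegAt Q L Ω β μ →
      ∀ᶠ μ' in nhds μ, μ' ∈ 𝔄 → AffNondegAt Q L Ω β μ') ∧
    IsOpen {μ | μ ∈ 𝔄 ∧ AffNondegAt Q L Ω β μ} := by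
  open AffAux in
  have main : ∀ μ ∈ 𝔄, AffNondegAt Q L Ω β μ →
      ∀ᶠ μ' in nhds μ, μ' ∈ 𝔄 → AffNondegAt Q L Ω β μ' := by
    intro μ hμ hnd
    rcases hnd with ⟨hn, hν, hρ0, hcond⟩ | ⟨hn, hν0, hρ0⟩ | ⟨hn0, hν, hκ⟩ | ⟨hn0, hν0⟩
    · -- case 1
      set ρ₀ := rhoQ Q Ω μ with hρ₀def
      have hρhalf : 0 < ρ₀ / 2 := by positivity
      have E1 := rho_lower h𝔄 hΩ hQ hs hn hμ hρhalf
      have E2 := kappa_close h𝔄 hβ hQ hs hμ L one_pos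
      have hΛfin : {ℓ : Fin ν → ℤ | (∑ j, |ℓ j|) ≤ (L : ℤ)}.Finite := finite_sum_abs_le L
      have E3 : ∀ᶠ μ' in 𝓝 μ, ∀ ℓ ∈ {ℓ : Fin ν → ℤ | (∑ j, |ℓ j|) ≤ (L : ℤ)},
          μ' ∈ 𝔄 → 1 ≤ (∑ j, |ℓ j|) →
          ∀ k ∈ {k : Fin n → ℤ | Real.sqrt (∑ i, ((k i : ℝ)) ^ 2)
              ≤ (kappaQ Q β ℓ μ + 1) / (ρ₀ / 2)},
          ∃ J : ℕ, 1 ≤ J ∧ J ≤ Q ∧ ∃ u : Fin s → ℝ,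
            dirDeriv s J
              (fun μ'' => (∑ i, (k i : ℝ) * Ω μ'' i) + ∑ j, (ℓ j : ℝ) * β μ'' j) μ' u ≠ 0 := by
        rw [eventually_all_finite hΛfin]
        intro ℓ hℓ
        by_cases h1 : 1 ≤ (∑ j, |ℓ j|)
        · have hKfin := finite_sqrt_le (n := n) ((kappaQ Q β ℓ μ + 1) / (ρ₀ / 2))
          have inner : ∀ k ∈ {k : Fin n → ℤ | Real.sqrt (∑ i, ((k i : ℝ)) ^ 2)
              ≤ (kappaQ Q β ℓ μ + 1) / (ρ₀ / 2)},
              ∀ᶠ μ' in 𝓝 μ, μ' ∈ 𝔄 →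
              ∃ J : ℕ, 1 ≤ J ∧ J ≤ Q ∧ ∃ u : Fin s → ℝ,
                dirDeriv s J
                  (fun μ'' => (∑ i, (k i : ℝ) * Ω μ'' i) + ∑ j, (ℓ j : ℝ) * β μ'' j) μ' u ≠ 0 := by
            intro k _
            have hex : ∃ J : ℕ, 1 ≤ J ∧ J ≤ Q ∧ ∃ u : Fin s → ℝ,
                dirDeriv s J
                  (fun μ'' => (∑ i, (k i : ℝ) * Ω μ'' i) + ∑ j, (ℓ j : ℝ) * β μ'' j) μ u ≠ 0 := by
              by_cases hc : Real.sqrt (∑ i, ((k i : ℝ)) ^ 2) ≤ kappaQ Q β ℓ μ / ρ₀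
              · exact hcond k ℓ h1 hℓ hc
              · exact auto_nondeg h𝔄 hΩ hβ hQ hs hμ hρ0 k ℓ
                  ((div_lt_iff₀ hρ0).1 (not_le.1 hc))
            exact nonvanish_eventually h𝔄 hΩ hβ hμ _ _ hex
          have := (eventually_all_finite hKfin).2 inner
          filter_upwards [this] with μ' hall hμ'𝔄 hk k hkmem
          exact hall k hkmem hμ'𝔄
        · exact Eventually.of_forall fun μ' _ h1' => absurd h1' h1
      filter_upwards [E1, E2, E3] with μ' he1 he2 he3 hμ'𝔄
      refine Or.inl ⟨hn, hν, by linarith [he1.2], ?_⟩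
      intro k ℓ h1 h2 hsq
      have hκ' : |kappaQ Q β ℓ μ' - kappaQ Q β ℓ μ| ≤ 1 := he2.2 ℓ h2
      rw [abs_sub_le_iff] at hκ'
      have hκμ0 : 0 ≤ kappaQ Q β ℓ μ := kappa_nonneg h𝔄 hβ hQ hs hμ ℓ
      have hρ' : ρ₀ / 2 ≤ rhoQ Q Ω μ' := by linarith [he1.2]
      have hratio : kappaQ Q β ℓ μ' / rhoQ Q Ω μ'
          ≤ (kappaQ Q β ℓ μ + 1) / (ρ₀ / 2) :=
        div_le_div₀ (by linarith) (by linarith [hκ'.1]) hρhalf hρ'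
      exact he3 ℓ h2 hμ'𝔄 h1 k (le_trans hsq hratio)
    · -- case 2
      have hρhalf : 0 < rhoQ Q Ω μ / 2 := by positivity
      filter_upwards [rho_lower h𝔄 hΩ hQ hs hn hμ hρhalf] with μ' he1 _
      exact Or.inr (Or.inl ⟨hn, hν0, by linarith [he1.2]⟩)
    · -- case 3
      have hΛfin : {ℓ : Fin ν → ℤ | (∑ j, |ℓ j|) ≤ (L : ℤ)}.Finite := finite_sum_abs_le L
      have E : ∀ᶠ μ' in 𝓝 μ, ∀ ℓ ∈ {ℓ : Fin ν → ℤ | (∑ j, |ℓ j|) ≤ (L : ℤ)},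
          μ' ∈ 𝔄 → 1 ≤ (∑ j, |ℓ j|) → 0 < kappaQ Q β ℓ μ' := by
        rw [eventually_all_finite hΛfin]
        intro ℓ hℓ
        by_cases h1 : 1 ≤ (∑ j, |ℓ j|)
        · have hpos : 0 < kappaQ Q β ℓ μ := hκ ℓ h1 hℓ
          filter_upwards [kappa_close h𝔄 hβ hQ hs hμ L (by positivity : (0:ℝ) < kappaQ Q β ℓ μ / 2)]
            with μ' hh _ _
          have := hh.2 ℓ hℓ
          rw [abs_sub_le_iff] at this
          linarith [this.2]
        · exact Eventually.of_forall fun μ' _ h1' => absurd h1' h1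
      filter_upwards [E] with μ' hall hμ'𝔄
      exact Or.inr (Or.inr (Or.inl ⟨hn0, hν, fun ℓ h1 h2 => hall ℓ h2 hμ'𝔄 h1⟩))
    · exact Eventually.of_forall fun μ' _ => Or.inr (Or.inr (Or.inr ⟨hn0, hν0⟩))
  refine ⟨main, ?_⟩
  rw [isOpen_iff_mem_nhds]
  rintro μ ⟨hμ𝔄, hnd⟩
  have h1 := main μ hμ𝔄 hnd
  have h2 : ∀ᶠ μ' in 𝓝 μ, μ' ∈ 𝔄 := h𝔄.mem_nhds hμ𝔄
  exact (h2.and h1).mono fun x ⟨hx, himp⟩ => ⟨hx, himp hx⟩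
end

section
/- Let d₁ ∈ ℕ, d₃ ∈ ℤ₊, d ∈ ℕ with d ≥ d₁ + d₃, let B̃ ⊂ ℝ^d be a closed ball, and fix τ⁎ > d₁ − 1. For b ∈ ℝ^d write b^{:1} = (b₁,…,b_{d₁}) ∈ ℝ^{d₁} and b^{:3} = (b_{d−d₃+1},…,b_d) ∈ ℝ^{d₃}. Then the Lebesgue measure meas_d of the set of those points b ∈ B̃ for which the pair of vectors (b^{:1}, b^{:3}) is NOT affinely (τ⁎,γ⁎,2)-Diophantine tends to 0 as γ⁎ → 0⁺. Moreover, if d₁ = 0 this set is empty for any τ⁎ ≥ 0 and γ⁎ > 0. -/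
open scoped BigOperators
open MeasureTheory Filter
open scoped ENNReal

lemma vol_slab_pos (a cc w : ℝ) (ha : 0 < a) :
    volume {x : ℝ | |a * x + cc| < w} ≤ ENNReal.ofReal (2 * w / a) := by
  have hset : {x : ℝ | |a * x + cc| < w} = Set.Ioo ((-w - cc)/a) ((w - cc)/a) := by
    ext x
    simp only [Set.mem_setOf_eq, Set.mem_Ioo, abs_lt, div_lt_iff₀ ha, lt_div_iff₀ ha]
    constructor <;> rintro ⟨hx1, hx2⟩ <;> constructor <;> nlinarith
  rw [hset, Real.volume_Ioo]
  apply le_of_eq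
  congr 1
  field_simp
  ring

lemma vol_slab_1d (a cc w : ℝ) (ha : a ≠ 0) :
    volume {x : ℝ | |a * x + cc| < w} ≤ ENNReal.ofReal (2 * w / |a|) := by
  rcases ha.lt_or_gt with h | h
  · have hset : {x : ℝ | |a * x + cc| < w} = {x : ℝ | |(-a) * x + (-cc)| < w} := by
      ext x; simp only [Set.mem_setOf_eq, neg_mul, ← neg_add, abs_neg]
    rw [hset, abs_of_neg h]
    exact vol_slab_pos (-a) (-cc) w (by linarith)
  · rw [abs_of_pos h]; exact vol_slab_pos a cc w h

lemma vol_band {m : ℕ} (a w r : ℝ) (ha : a ≠ 0) (hr : 0 ≤ r) (c' : Fin m → ℝ)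
    (g : (Fin m → ℝ) → ℝ) (hg : Measurable g) :
    (volume.prod volume)
      {p : ℝ × (Fin m → ℝ) | (∀ j, |p.2 j - c' j| ≤ r) ∧ |a * p.1 + g p.2| < w}
      ≤ ENNReal.ofReal (2 * w / |a|) * ENNReal.ofReal ((2 * r) ^ m) := by
  set box : Set (Fin m → ℝ) := Set.pi Set.univ (fun j => Set.Icc (c' j - r) (c' j + r)) with hbox
  have hboxm : MeasurableSet box := MeasurableSet.univ_pi fun j => measurableSet_Icc
  have hboxmem : ∀ y : Fin m → ℝ, y ∈ box ↔ ∀ j, |y j - c' j| ≤ r := by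
    intro y
    simp only [hbox, Set.mem_pi, Set.mem_univ, forall_true_left, Set.mem_Icc, abs_le]
    constructor <;> intro h j <;> have := h j <;> constructor <;> linarith [this.1, this.2]
  have hsm : MeasurableSet {p : ℝ × (Fin m → ℝ) |
      (∀ j, |p.2 j - c' j| ≤ r) ∧ |a * p.1 + g p.2| < w} := by
    rw [Set.setOf_and]
    apply MeasurableSet.inter
    · have : {p : ℝ × (Fin m → ℝ) | ∀ j, |p.2 j - c' j| ≤ r} = Prod.snd ⁻¹' box := by
        ext p; simp [hboxmem]
      rw [this]; exact measurable_snd hboxm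
    · have : Measurable fun p : ℝ × (Fin m → ℝ) => |a * p.1 + g p.2| :=
        ((measurable_fst.const_mul a).add (hg.comp measurable_snd)).abs
      exact measurableSet_lt this measurable_const
  rw [Measure.prod_apply_symm hsm]
  have hpt : ∀ y : Fin m → ℝ,
      volume ((fun x => (x, y)) ⁻¹' {p : ℝ × (Fin m → ℝ) |
        (∀ j, |p.2 j - c' j| ≤ r) ∧ |a * p.1 + g p.2| < w})
      ≤ box.indicator (fun _ => ENNReal.ofReal (2 * w / |a|)) y := by
    intro y
    by_cases hy : y ∈ box
    · rw [Set.indicator_of_mem hy]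
      refine le_trans (measure_mono ?_) (vol_slab_1d a (g y) w ha)
      intro x hx
      exact hx.2
    · rw [Set.indicator_of_notMem hy]
      have : ((fun x => (x, y)) ⁻¹' {p : ℝ × (Fin m → ℝ) |
          (∀ j, |p.2 j - c' j| ≤ r) ∧ |a * p.1 + g p.2| < w}) = ∅ := by
        ext x
        simp only [Set.mem_preimage, Set.mem_setOf_eq, Set.mem_empty_iff_false, iff_false,
          not_and]
        intro h
        exact absurd ((hboxmem y).mpr h) hy
      simp [this]
  refine le_trans (lintegral_mono hpt) ?_
  rw [lintegral_indicator hboxm, setLIntegral_const]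
  have hvol : volume box = ENNReal.ofReal ((2 * r) ^ m) := by
    rw [hbox, volume_pi_pi]
    have : ∀ j : Fin m, volume (Set.Icc (c' j - r) (c' j + r)) = ENNReal.ofReal (2 * r) := by
      intro j; rw [Real.volume_Icc]; congr 1; ring
    simp only [this, Finset.prod_const, Finset.card_univ, Fintype.card_fin]
    rw [← ENNReal.ofReal_pow (by linarith)]
  rw [hvol]

lemma vol_pi_slab {m : ℕ} (i₀ : Fin (m + 1)) (a w r : ℝ) (ha : a ≠ 0) (hr : 0 ≤ r)
    (c : Fin (m + 1) → ℝ) (F : (Fin (m + 1) → ℝ) → ℝ) (g : (Fin m → ℝ) → ℝ)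
    (hg : Measurable g) (hF : ∀ b, F b = a * b i₀ + g (fun j => b (i₀.succAbove j))) :
    volume {b : Fin (m + 1) → ℝ | (∀ j, |b j - c j| ≤ r) ∧ |F b| < w}
      ≤ ENNReal.ofReal (2 * w / |a|) * ENNReal.ofReal ((2 * r) ^ m) := by
  set e := MeasurableEquiv.piFinSuccAbove (fun _ : Fin (m + 1) => ℝ) i₀ with he
  set T : Set (ℝ × (Fin m → ℝ)) :=
    {p | (∀ j, |p.2 j - c (i₀.succAbove j)| ≤ r) ∧ |a * p.1 + g p.2| < w} with hT
  have hTm : MeasurableSet T := by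
    rw [hT, Set.setOf_and]
    apply MeasurableSet.inter
    · rw [Set.setOf_forall]
      apply MeasurableSet.iInter
      intro j
      exact measurableSet_le
        (((measurable_pi_apply j).comp measurable_snd).sub measurable_const).abs
        measurable_const
    · exact measurableSet_lt
        (((measurable_fst.const_mul a).add (hg.comp measurable_snd)).abs) measurable_const
  have hsub : {b : Fin (m + 1) → ℝ | (∀ j, |b j - c j| ≤ r) ∧ |F b| < w} ⊆ e ⁻¹' T := by
    intro b hb
    simp only [Set.mem_preimage, he, MeasurableEquiv.piFinSuccAbove_apply,
      Fin.insertNthEquiv_symm_apply, Fin.removeNth, hT, Set.mem_setOf_eq]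
    refine ⟨fun j => hb.1 _, ?_⟩
    have h2 : a * b i₀ + g (i₀.removeNth b) = F b := (hF b).symm
    rw [h2]
    exact hb.2
  refine le_trans (measure_mono hsub) ?_
  have hmp := (volume_preserving_piFinSuccAbove (fun _ : Fin (m + 1) => ℝ) i₀).measure_preimage
    hTm.nullMeasurableSet
  rw [← he] at hmp
  rw [hmp, Measure.volume_eq_prod]
  exact vol_band a w r ha hr (fun j => c (i₀.succAbove j)) g hg

lemma summable_one_add_abs_int {p : ℝ} (hp : 1 < p) :
    Summable (fun n : ℤ => (1 + |(n : ℝ)|) ^ (-p)) := by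
  have hnat : Summable (fun n : ℕ => (1 + (n : ℝ)) ^ (-p)) := by
    have h0 : Summable (fun n : ℕ => ((n : ℝ)) ^ (-p)) :=
      Real.summable_nat_rpow.mpr (by linarith)
    have h1 := (summable_nat_add_iff 1).mpr h0
    refine h1.congr fun n => ?_
    push_cast
    ring_nf
  apply Summable.of_nat_of_neg
  · refine hnat.congr fun n => ?_
    norm_num
  · refine hnat.congr fun n => ?_
    push_cast
    rw [abs_neg, abs_of_nonneg (by positivity : (0:ℝ) ≤ (n:ℝ))]

lemma summable_pi_int {n : ℕ} {g : ℤ → ℝ} (hg : Summable g) (hg0 : ∀ x, 0 ≤ g x) :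
    Summable (fun k : Fin n → ℤ => ∏ i, g (k i)) := by
  induction n with
  | zero =>
    exact Summable.of_finite
  | succ n ih =>
    have hg0' : (0 : ℤ → ℝ) ≤ g := hg0
    have hih0 : (0 : (Fin n → ℤ) → ℝ) ≤ fun k => ∏ i, g (k i) :=
      fun k => Finset.prod_nonneg fun i _ => hg0 _
    have hprod : Summable (fun x : ℤ × (Fin n → ℤ) => g x.1 * ∏ i, g (x.2 i)) :=
      Summable.mul_of_nonneg (f := g) (g := fun k : Fin n → ℤ => ∏ i, g (k i)) hg ih hg0' hih0
    rw [← (Fin.consEquiv (fun _ : Fin (n + 1) => ℤ)).summable_iff]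
    refine hprod.congr fun x => ?_
    show g x.1 * ∏ i, g (x.2 i) = ∏ i : Fin (n+1), g ((Fin.cons x.1 x.2 : Fin (n+1) → ℤ) i)
    rw [Fin.prod_univ_succ]
    simp [Fin.cons_zero, Fin.cons_succ]

lemma summable_main (n : ℕ) (hn : 0 < n) (σ : ℝ) (hσ : (n : ℝ) < σ) :
    Summable (fun k : Fin n → ℤ => (1 + ∑ i, |(k i : ℝ)|) ^ (-σ)) := by
  have hn' : (0:ℝ) < n := by exact_mod_cast hn
  set p := σ / n with hp
  have hp1 : 1 < p := (lt_div_iff₀ hn').mpr (by linarith)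
  have h1 := summable_one_add_abs_int hp1
  have h2 := summable_pi_int (n := n) h1
    (fun x => Real.rpow_nonneg (by positivity) _)
  refine Summable.of_nonneg_of_le (fun k => Real.rpow_nonneg (by positivity) _) ?_ h2
  intro k
  set T : ℝ := 1 + ∑ i, |(k i : ℝ)| with hT
  have hT1 : 1 ≤ T := by
    have : (0:ℝ) ≤ ∑ i, |(k i : ℝ)| := Finset.sum_nonneg fun i _ => abs_nonneg _
    linarith
  have hfac : ∀ i : Fin n, 1 + |(k i : ℝ)| ≤ T := by
    intro i
    have : |(k i : ℝ)| ≤ ∑ j, |(k j : ℝ)| :=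
      Finset.single_le_sum (f := fun j => |(k j : ℝ)|) (fun j _ => abs_nonneg _)
        (Finset.mem_univ i)
    simp only [hT]; linarith
  set P : ℝ := ∏ i, (1 + |(k i : ℝ)|) with hP
  have hP0 : 0 < P := Finset.prod_pos fun i _ => by positivity
  have hPT : P ≤ T ^ n := by
    calc P ≤ ∏ _i : Fin n, T :=
          Finset.prod_le_prod (fun i _ => by positivity) (fun i _ => hfac i)
      _ = T ^ n := by rw [Finset.prod_const, Finset.card_univ, Fintype.card_fin]
  have heq : (∏ i, (1 + |(k i : ℝ)|) ^ (-p)) = P ^ (-p) :=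
    Real.finset_prod_rpow Finset.univ _ (fun i _ => by positivity) (-p)
  have hTP : T ^ (-σ) ≤ P ^ (-p) := by
    have h3 : (T ^ n : ℝ) ^ (-p) ≤ P ^ (-p) :=
      Real.rpow_le_rpow_of_nonpos hP0 hPT (by linarith)
    calc T ^ (-σ) = (T ^ n : ℝ) ^ (-p) := by
          rw [← Real.rpow_natCast T n, ← Real.rpow_mul (by linarith)]
          congr 1
          rw [hp]
          field_simp
      _ ≤ P ^ (-p) := h3
  rw [heq]
  exact hTP

/-- A pair of vectors `(Ω, β)` is affinely `(τ, γ, L)`-Diophantine. -/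
def AffinelyDiophantine {n ν : ℕ} (τ γ : ℝ) (L : ℕ) (Ω : Fin n → ℝ) (β : Fin ν → ℝ) : Prop :=
  ∀ k : Fin n → ℤ, k ≠ 0 → ∀ ℓ : Fin ν → ℤ, (∑ j, |ℓ j|) ≤ (L : ℤ) →
    |(∑ i, Ω i * (k i : ℝ)) + ∑ j, β j * (ℓ j : ℝ)| ≥ γ * (∑ i, |(k i : ℝ)|) ^ (-τ)

/-- The first `d₁` components of a vector `b ∈ ℝ^d`. -/
def firstPart (d₁ d : ℕ) (h : d₁ ≤ d) (b : Fin d → ℝ) : Fin d₁ → ℝ :=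
  fun i => b (Fin.castLE h i)

/-- The last `d₃` components of a vector `b ∈ ℝ^d`. -/
def lastPart (d₃ d : ℕ) (h : d₃ ≤ d) (b : Fin d → ℝ) : Fin d₃ → ℝ :=
  fun j => b ⟨d - d₃ + j.1, by have := j.isLt; omega⟩

/-- for a fixed closed ball `B̃ ⊂ ℝ^d` and fixed `τ⁎ > d₁ - 1` (with `d₁ ≥ 1`,
`d₁ + d₃ ≤ d`), the Lebesgue measure of the set of points `b ∈ B̃` for which the pair
`(b^{:1}, b^{:3})` of the first `d₁` and last `d₃` components of `b` is NOT affinely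
`(τ⁎,γ⁎,2)`-Diophantine tends to `0` as `γ⁎ → 0⁺`.  Moreover, if `d₁ = 0`, the corresponding
set is empty for all `τ⁎ ≥ 0` and `γ⁎ > 0`. -/
theorem measure_not_affinelyDiophantine_tendsto_zero
    (d₁ d₃ d : ℕ) (hd : d₁ + d₃ ≤ d) (h1 : d₁ ≤ d) (h3 : d₃ ≤ d)
    (c : Fin d → ℝ) (r : ℝ) (hr : 0 < r) :
    (∀ τs : ℝ, (d₁ : ℝ) - 1 < τs → 0 < d₁ →
      Tendsto
        (fun γs : ℝ =>
          volume {b : Fin d → ℝ | (∑ i, (b i - c i) ^ 2) ≤ r ^ 2 ∧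
            ¬ AffinelyDiophantine τs γs 2 (firstPart d₁ d h1 b) (lastPart d₃ d h3 b)})
        (nhdsWithin 0 (Set.Ioi 0)) (nhds 0)) ∧
    (d₁ = 0 → ∀ τs : ℝ, 0 ≤ τs → ∀ γs : ℝ, 0 < γs →
      {b : Fin d → ℝ | (∑ i, (b i - c i) ^ 2) ≤ r ^ 2 ∧
        ¬ AffinelyDiophantine τs γs 2 (firstPart d₁ d h1 b) (lastPart d₃ d h3 b)} = ∅) := by
  constructor
  · intro τs hτ hd₁pos
    obtain ⟨m, rfl⟩ : ∃ m, d = m + 1 := ⟨d - 1, by omega⟩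
    -- basic setup
    set σ : ℝ := τs + 1 with hσdef
    have hσd : (d₁ : ℝ) < σ := by simp only [hσdef]; linarith
    have hσ0 : (0:ℝ) < σ := lt_of_le_of_lt (by positivity) hσd
    set gf : (Fin d₁ → ℤ) → ℝ := fun k => (1 + ∑ i, |(k i : ℝ)|) ^ (-σ) with hgf
    have hsum : Summable gf := summable_main d₁ hd₁pos σ hσd
    have hgf0 : ∀ k, 0 ≤ gf k := fun k => Real.rpow_nonneg (by positivity) _
    set Gtot : ℝ≥0∞ := ∑' k, ENNReal.ofReal (gf k) with hGtotdef
    have hGtot : Gtot ≠ ⊤ := by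
      rw [hGtotdef, ← ENNReal.ofReal_tsum_of_nonneg hgf0 hsum]
      exact ENNReal.ofReal_ne_top
    classical
    set Lf : Finset (Fin d₃ → ℤ) :=
      Finset.filter (fun ℓ => (∑ j, |ℓ j|) ≤ 2)
        (Fintype.piFinset fun _ => Finset.Icc (-2 : ℤ) 2) with hLfdef
    have hLfmem : ∀ ℓ : Fin d₃ → ℤ, (∑ j, |ℓ j|) ≤ 2 → ℓ ∈ Lf := by
      intro ℓ hℓ
      rw [hLfdef, Finset.mem_filter]
      refine ⟨Fintype.mem_piFinset.mpr fun j => ?_, hℓ⟩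
      have h1 : |ℓ j| ≤ ∑ j', |ℓ j'| :=
        Finset.single_le_sum (f := fun j' => |ℓ j'|) (fun j' _ => abs_nonneg _)
          (Finset.mem_univ j)
      have h2 : |ℓ j| ≤ 2 := le_trans h1 hℓ
      rw [abs_le] at h2
      rw [Finset.mem_Icc]
      exact h2
    set Cunit : ℝ≥0∞ := ENNReal.ofReal (2 * d₁ * 2 ^ σ * (2 * r) ^ m) with hCunit
    set Ctot : ℝ≥0∞ := (Lf.card : ℝ≥0∞) * Cunit * Gtot with hCtotdef
    have hCtop : Ctot ≠ ⊤ :=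
      ENNReal.mul_ne_top (ENNReal.mul_ne_top (ENNReal.natCast_ne_top _)
        ENNReal.ofReal_ne_top) hGtot
    -- the key measure bound
    have key : ∀ γs : ℝ, 0 < γs →
        volume {b : Fin (m+1) → ℝ | (∑ i, (b i - c i) ^ 2) ≤ r ^ 2 ∧
          ¬ AffinelyDiophantine τs γs 2 (firstPart d₁ (m+1) h1 b) (lastPart d₃ (m+1) h3 b)}
          ≤ ENNReal.ofReal γs * Ctot := by
      intro γs hγ
      -- the linear form
      set F : (Fin d₁ → ℤ) → (Fin d₃ → ℤ) → (Fin (m+1) → ℝ) → ℝ := fun k ℓ b =>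
        (∑ i, firstPart d₁ (m+1) h1 b i * (k i : ℝ)) +
          ∑ j, lastPart d₃ (m+1) h3 b j * (ℓ j : ℝ) with hFdef
      set badS : (Fin d₁ → ℤ) → (Fin d₃ → ℤ) → Set (Fin (m+1) → ℝ) := fun k ℓ =>
        {b | (∀ i, |b i - c i| ≤ r) ∧ |F k ℓ b| < γs * (∑ i, |(k i : ℝ)|) ^ (-τs)} with hbadS
      set A : (Fin d₁ → ℤ) → Set (Fin (m+1) → ℝ) := fun k =>
        if k = 0 then ∅ else ⋃ ℓ ∈ Lf, badS k ℓ with hA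
      -- covering
      have hcover : {b : Fin (m+1) → ℝ | (∑ i, (b i - c i) ^ 2) ≤ r ^ 2 ∧
          ¬ AffinelyDiophantine τs γs 2 (firstPart d₁ (m+1) h1 b) (lastPart d₃ (m+1) h3 b)}
          ⊆ ⋃ k, A k := by
        intro b hb
        obtain ⟨hball, hnd⟩ := hb
        have hbox : ∀ i, |b i - c i| ≤ r := by
          intro i
          have h2 : (b i - c i) ^ 2 ≤ r ^ 2 :=
            le_trans (Finset.single_le_sum (f := fun i => (b i - c i) ^ 2)
              (fun i _ => sq_nonneg _) (Finset.mem_univ i)) hball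
          exact abs_le.mpr ⟨by nlinarith, by nlinarith⟩
        simp only [AffinelyDiophantine, not_forall, ge_iff_le, not_le] at hnd
        obtain ⟨k, hk0, ℓ, hℓ, hlt⟩ := hnd
        refine Set.mem_iUnion.mpr ⟨k, ?_⟩
        rw [hA]
        simp only [if_neg hk0]
        refine Set.mem_biUnion (hLfmem ℓ hℓ) ?_
        exact ⟨hbox, hlt⟩
      refine le_trans (measure_mono hcover) ?_
      refine le_trans (measure_iUnion_le A) ?_
      -- per-k bound
      have hAk : ∀ k : Fin d₁ → ℤ,
          volume (A k) ≤ (Lf.card : ℝ≥0∞) * (ENNReal.ofReal γs * Cunit * ENNReal.ofReal (gf k)) := by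
        intro k
        rw [hA]
        by_cases hk : k = 0
        · simp [hk]
        · simp only [if_neg hk]
          have hbadk : ∀ ℓ ∈ Lf, volume (badS k ℓ) ≤
              ENNReal.ofReal γs * Cunit * ENNReal.ofReal (gf k) := by
            intro ℓ _
            obtain ⟨i₀, -, hi₀⟩ := Finset.exists_max_image Finset.univ
              (fun i => |(k i : ℝ)|) ⟨⟨0, hd₁pos⟩, Finset.mem_univ _⟩
            obtain ⟨j₀, hj₀⟩ := Function.ne_iff.mp hk
            have hj₀' : k j₀ ≠ 0 := hj₀
            have hkj₀ : (1:ℝ) ≤ |(k j₀ : ℝ)| := by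
              have hz : (1:ℤ) ≤ |k j₀| := by
                rcases abs_pos.mpr hj₀' with h
                omega
              calc (1:ℝ) ≤ ((|k j₀| : ℤ) : ℝ) := by exact_mod_cast hz
                _ = |(k j₀ : ℝ)| := by push_cast; rfl
            have ha1 : (1:ℝ) ≤ |(k i₀ : ℝ)| := le_trans hkj₀ (hi₀ j₀ (Finset.mem_univ _))
            have ha : ((k i₀ : ℝ)) ≠ 0 := by
              intro h
              rw [h, abs_zero] at ha1
              linarith
            set S : ℝ := ∑ i, |(k i : ℝ)| with hS
            have hS1 : (1:ℝ) ≤ S := le_trans hkj₀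
              (Finset.single_le_sum (f := fun i => |(k i : ℝ)|) (fun i _ => abs_nonneg _)
                (Finset.mem_univ j₀))
            have hS0 : (0:ℝ) < S := by linarith
            have hSa : S ≤ d₁ * |(k i₀ : ℝ)| := by
              calc S ≤ ∑ _i : Fin d₁, |(k i₀ : ℝ)| :=
                    Finset.sum_le_sum (fun i _ => hi₀ i (Finset.mem_univ _))
                _ = d₁ * |(k i₀ : ℝ)| := by
                    rw [Finset.sum_const, Finset.card_univ, Fintype.card_fin, nsmul_eq_mul]
            set w : ℝ := γs * S ^ (-τs) with hw
            have hw0 : 0 < w := mul_pos hγ (Real.rpow_pos_of_pos hS0 _)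
            set I₀ : Fin (m+1) := Fin.castLE h1 i₀ with hI₀
            set g : (Fin m → ℝ) → ℝ := fun y => F k ℓ (Fin.insertNth (α := fun _ => ℝ) I₀ 0 y) with hgdef
            have hFm : Measurable (F k ℓ) := by
              apply Measurable.add
              · exact Finset.measurable_sum _ (fun i _ => (measurable_pi_apply _).mul_const _)
              · exact Finset.measurable_sum _ (fun j _ => (measurable_pi_apply _).mul_const _)
            have hgm : Measurable g := by
              have h1' : Measurable (fun y : Fin m → ℝ => (Fin.insertNth (α := fun _ => ℝ) I₀ 0 y)) := by
                apply measurable_pi_iff.mpr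
                intro j
                rcases eq_or_ne j I₀ with hj | hj
                · subst hj
                  simpa [Fin.insertNth_apply_same] using (measurable_const :
                    Measurable (fun _ : Fin m → ℝ => (0:ℝ)))
                · obtain ⟨j', rfl⟩ := Fin.exists_succAbove_eq hj
                  simpa [Fin.insertNth_apply_succAbove] using
                    (measurable_pi_apply j' : Measurable (fun y : Fin m → ℝ => y j'))
              exact hFm.comp h1'
            have hupd : ∀ b : Fin (m+1) → ℝ,
                Fin.insertNth (α := fun _ => ℝ) I₀ 0 (fun j => b (I₀.succAbove j)) = Function.update b I₀ 0 := by
              intro b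
              rw [Fin.insertNth_eq_iff]
              constructor
              · rw [Function.update_self]
              · funext j
                exact (Function.update_of_ne (Fin.succAbove_ne I₀ j) 0 b).symm
            have hfirst : ∀ (b : Fin (m+1) → ℝ) (i : Fin d₁),
                Function.update b I₀ (0:ℝ) (Fin.castLE h1 i)
                = if i = i₀ then 0 else b (Fin.castLE h1 i) := by
              intro b i
              rcases eq_or_ne i i₀ with hii | hii
              · subst hii
                rw [if_pos rfl, show Fin.castLE h1 i = I₀ from rfl, Function.update_self]
              · rw [if_neg hii]
                apply Function.update_of_ne
                rw [hI₀]
                intro hcon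
                exact hii (by
                  apply Fin.ext
                  have := congrArg Fin.val hcon
                  simpa using this)
            have hsecond : ∀ (b : Fin (m+1) → ℝ) (j : Fin d₃),
                lastPart d₃ (m+1) h3 (Function.update b I₀ (0:ℝ)) j
                  = lastPart d₃ (m+1) h3 b j := by
              intro b j
              apply Function.update_of_ne
              apply Fin.ne_of_val_ne
              have hj := j.isLt
              have hi := i₀.isLt
              simp only [hI₀, Fin.coe_castLE]
              omega
            have hsum1 : ∀ b : Fin (m+1) → ℝ,
                ∑ i, Function.update b I₀ (0:ℝ) (Fin.castLE h1 i) * (k i : ℝ)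
                = (∑ i, b (Fin.castLE h1 i) * (k i : ℝ)) - b I₀ * (k i₀ : ℝ) := by
              intro b
              rw [Finset.sum_congr rfl (fun i _ => by rw [hfirst b i])]
              have hterm : ∀ i : Fin d₁,
                  (if i = i₀ then (0:ℝ) else b (Fin.castLE h1 i)) * (k i : ℝ)
                  = b (Fin.castLE h1 i) * (k i : ℝ)
                    - (if i = i₀ then b (Fin.castLE h1 i) * (k i : ℝ) else 0) := by
                intro i
                split_ifs <;> ring
              rw [Finset.sum_congr rfl (fun i _ => hterm i), Finset.sum_sub_distrib]
              congr 1
              rw [Finset.sum_ite_eq' Finset.univ i₀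
                (fun i => b (Fin.castLE h1 i) * (k i : ℝ)), if_pos (Finset.mem_univ _)]
            have hFdec : ∀ b : Fin (m+1) → ℝ,
                F k ℓ b = (k i₀ : ℝ) * b I₀ + g (fun j => b (I₀.succAbove j)) := by
              intro b
              have hgval : g (fun j => b (I₀.succAbove j)) = F k ℓ (Function.update b I₀ 0) := by
                rw [hgdef]
                simp only []
                rw [hupd b]
              rw [hgval]
              have e1 : F k ℓ (Function.update b I₀ 0)
                  = ((∑ i, b (Fin.castLE h1 i) * (k i : ℝ)) - b I₀ * (k i₀ : ℝ))
                    + ∑ j, lastPart d₃ (m+1) h3 b j * (ℓ j : ℝ) := by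
                rw [hFdef]
                simp only [firstPart]
                rw [hsum1 b]
                congr 1
                exact Finset.sum_congr rfl (fun j _ => by rw [hsecond b j])
              rw [e1, hFdef]
              simp only [firstPart]
              ring
            have hslab := vol_pi_slab I₀ ((k i₀ : ℝ)) w r ha (le_of_lt hr) c (F k ℓ) g hgm hFdec
            refine le_trans (le_of_eq ?_) (le_trans hslab ?_)
            · rfl
            · have hgfk : gf k = (1 + S) ^ (-σ) := rfl
              rw [← ENNReal.ofReal_mul (by positivity), hCunit,
                ← ENNReal.ofReal_mul (le_of_lt hγ), ← ENNReal.ofReal_mul (by positivity)]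
              apply ENNReal.ofReal_le_ofReal
              rw [hgfk]
              have habs0 : (0:ℝ) < |(k i₀ : ℝ)| := by linarith
              have hinv : 1 / |(k i₀ : ℝ)| ≤ d₁ / S := by
                rw [div_le_div_iff₀ habs0 hS0]
                linarith
              have hrw : S ^ (-τs) * ((d₁ : ℝ) / S) = d₁ * S ^ (-σ) := by
                have hsplit : S ^ (-σ) = S ^ (-τs) * S ^ (-(1:ℝ)) := by
                  rw [← Real.rpow_add hS0]
                  congr 1
                  rw [hσdef]
                  ring
                rw [hsplit, Real.rpow_neg_one]
                field_simp
              have h6 : S ^ (-σ) ≤ 2 ^ σ * (1 + S) ^ (-σ) := by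
                have h2S : (2 * S) ^ (-σ) ≤ (1 + S) ^ (-σ) :=
                  Real.rpow_le_rpow_of_nonpos (by linarith) (by linarith) (by linarith)
                have hmulr : (2 * S) ^ (-σ) = (2:ℝ) ^ (-σ) * S ^ (-σ) :=
                  Real.mul_rpow (by norm_num) (le_of_lt hS0)
                have h2pow : (2:ℝ) ^ σ * (2:ℝ) ^ (-σ) = 1 := by
                  rw [← Real.rpow_add (by norm_num)]
                  simp
                calc S ^ (-σ) = 2 ^ σ * ((2:ℝ) ^ (-σ) * S ^ (-σ)) := by
                      rw [← mul_assoc, h2pow, one_mul]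
                  _ = 2 ^ σ * (2 * S) ^ (-σ) := by rw [hmulr]
                  _ ≤ 2 ^ σ * (1 + S) ^ (-σ) := by
                      apply mul_le_mul_of_nonneg_left h2S
                      positivity
              have hrm : (0:ℝ) ≤ (2 * r) ^ m := by positivity
              have hSτ : (0:ℝ) < S ^ (-τs) := Real.rpow_pos_of_pos hS0 _
              calc 2 * w / |(k i₀ : ℝ)| * (2 * r) ^ m
                  = 2 * γs * (2 * r) ^ m * (S ^ (-τs) * (1 / |(k i₀ : ℝ)|)) := by
                    rw [hw]
                    field_simp
                _ ≤ 2 * γs * (2 * r) ^ m * (S ^ (-τs) * ((d₁ : ℝ) / S)) := by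
                    apply mul_le_mul_of_nonneg_left _ (by positivity)
                    exact mul_le_mul_of_nonneg_left hinv (le_of_lt hSτ)
                _ = 2 * γs * (2 * r) ^ m * ((d₁ : ℝ) * S ^ (-σ)) := by rw [hrw]
                _ ≤ 2 * γs * (2 * r) ^ m * ((d₁ : ℝ) * (2 ^ σ * (1 + S) ^ (-σ))) := by
                    apply mul_le_mul_of_nonneg_left _ (by positivity)
                    exact mul_le_mul_of_nonneg_left h6 (by positivity)
                _ = γs * (2 * (d₁ : ℝ) * 2 ^ σ * (2 * r) ^ m) * (1 + S) ^ (-σ) := by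
                    ring
          calc volume (⋃ ℓ ∈ Lf, badS k ℓ) ≤ ∑ ℓ ∈ Lf, volume (badS k ℓ) :=
                measure_biUnion_finset_le Lf _
            _ ≤ ∑ _ℓ ∈ Lf, (ENNReal.ofReal γs * Cunit * ENNReal.ofReal (gf k)) :=
                Finset.sum_le_sum hbadk
            _ = (Lf.card : ℝ≥0∞) * (ENNReal.ofReal γs * Cunit * ENNReal.ofReal (gf k)) := by
                rw [Finset.sum_const, nsmul_eq_mul]
      refine le_trans (ENNReal.tsum_le_tsum hAk) ?_
      have : ∀ k : Fin d₁ → ℤ, (Lf.card : ℝ≥0∞) * (ENNReal.ofReal γs * Cunit * ENNReal.ofReal (gf k))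
          = ((Lf.card : ℝ≥0∞) * ENNReal.ofReal γs * Cunit) * ENNReal.ofReal (gf k) := by
        intro k; ring
      rw [tsum_congr this, ENNReal.tsum_mul_left, ← hGtotdef]
      apply le_of_eq
      rw [hCtotdef]
      ring
    -- squeeze
    have hb : Tendsto (fun γs : ℝ => ENNReal.ofReal γs * Ctot)
        (nhdsWithin 0 (Set.Ioi 0)) (nhds 0) := by
      have h0 : Tendsto ENNReal.ofReal (nhdsWithin (0:ℝ) (Set.Ioi 0)) (nhds (ENNReal.ofReal 0)) :=
        (ENNReal.continuous_ofReal.tendsto 0).mono_left nhdsWithin_le_nhds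
      have := ENNReal.Tendsto.mul_const h0 (Or.inr hCtop)
      simpa using this
    refine tendsto_of_tendsto_of_tendsto_of_le_of_le' tendsto_const_nhds hb ?_ ?_
    · exact Filter.Eventually.of_forall fun γs => zero_le
    · filter_upwards [self_mem_nhdsWithin] with γs hγs
      exact key γs hγs
  · intro hd₁ τs hτ γs hγ
    subst hd₁
    ext b
    simp only [Set.mem_setOf_eq, Set.mem_empty_iff_false, iff_false, not_and]
    intro _ hnd
    exact hnd fun k hk ℓ hℓ => absurd (Subsingleton.elim k 0) hk
end
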